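/- arXiv:1710.09562 — 8 statements merged into one kernel-verified Lean document; each statement's English description precedes it below -/
import Mathlib

section
/- For each i ∈ {1,…,m}, let {φ_{ij}}_{j∈ℕ} be a K-frame for H with K-frame bounds A_i and B_i. Suppose there exists A > 0 such that for every partition σ = {σ_i}_{i=1}^m of ℕ there exists a bounded linear operator M_σ : ℓ²(ℕ) → H satisfying M_σ(e_j) = φ_{ij} for every j ∈ σ_i and every i ∈ {1,…,m}, and A·KK* ≤ M_σ M_σ* (i.e. A‖K* f‖² ≤ ‖M_σ* f‖² for all f ∈ H), where {e_j}_{j∈ℕ} is the canonical orthonormal basis of ℓ²(ℕ). Then the family {φ_{ij}}_{j∈ℕ} (i = 1,…,m) is K-woven, with universal lower bound A and universal upper bound ∑_{i=1}^m B_i. -/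
/- STATEMENT 2: if there is A > 0 such that for every partition σ there is a bounded
operator M_σ : ℓ²(ℕ) → H with M_σ(e_j) = φ_{ij} for j ∈ σ_i and A·KK* ≤ M_σM_σ*, then
the family of K-frames is K-woven with universal lower bound A and upper bound ∑ Bᵢ. -/

local notation "⟪" x ", " y "⟫" => @inner ℂ _ _ x y

noncomputable section

variable {H : Type} [NormedAddCommGroup H] [InnerProductSpace ℂ H] [CompleteSpace H]

/-- `φ` is a `K`-frame for `H` with lower bound `A` and upper bound `B`. -/
def IsKFrameWith (K : H →L[ℂ] H) (φ : ℕ → H) (A B : ℝ) : Prop :=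
  0 < A ∧ 0 < B ∧ ∀ f : H,
    Summable (fun j : ℕ => ‖⟪f, φ j⟫‖ ^ 2) ∧
    A * ‖ContinuousLinearMap.adjoint K f‖ ^ 2 ≤ ∑' j : ℕ, ‖⟪f, φ j⟫‖ ^ 2 ∧
    ∑' j : ℕ, ‖⟪f, φ j⟫‖ ^ 2 ≤ B * ‖f‖ ^ 2

theorem stmt2 [TopologicalSpace.SeparableSpace H]
    (m : ℕ) (K : H →L[ℂ] H) (φ : Fin m → ℕ → H) (A' B : Fin m → ℝ)
    (hframe : ∀ i, IsKFrameWith K (φ i) (A' i) (B i))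
    (A : ℝ) (hA : 0 < A)
    (hM : ∀ σ : Fin m → Set ℕ,
      Pairwise (Function.onFun Disjoint σ) → (⋃ i, σ i) = Set.univ →
      ∃ M : lp (fun _ : ℕ => ℂ) 2 →L[ℂ] H,
        (∀ i : Fin m, ∀ j ∈ σ i, M (lp.single 2 j (1 : ℂ)) = φ i j) ∧
        ∀ f : H,
          A * ‖ContinuousLinearMap.adjoint K f‖ ^ 2 ≤
            ‖ContinuousLinearMap.adjoint M f‖ ^ 2) :
    ∀ σ : Fin m → Set ℕ,
      Pairwise (Function.onFun Disjoint σ) → (⋃ i, σ i) = Set.univ →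
      ∀ f : H,
        (∀ i, Summable (fun j : σ i => ‖⟪f, φ i (j : ℕ)⟫‖ ^ 2)) ∧
        A * ‖ContinuousLinearMap.adjoint K f‖ ^ 2 ≤
          ∑ i : Fin m, ∑' j : σ i, ‖⟪f, φ i (j : ℕ)⟫‖ ^ 2 ∧
        ∑ i : Fin m, ∑' j : σ i, ‖⟪f, φ i (j : ℕ)⟫‖ ^ 2 ≤ (∑ i : Fin m, B i) * ‖f‖ ^ 2 := by
  intro σ hdisj hcover f
  -- summability of restricted sums
  have hsum : ∀ i, Summable (fun j : σ i => ‖⟪f, φ i (j : ℕ)⟫‖ ^ 2) := by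
    intro i
    exact ((hframe i).2.2 f).1.subtype _
  refine ⟨hsum, ?_, ?_⟩
  · -- lower bound
    obtain ⟨M, hMs, hMlow⟩ := hM σ hdisj hcover
    set g : ℕ → ℝ := fun j => ‖(ContinuousLinearMap.adjoint M f : lp (fun _ : ℕ => ℂ) 2) j‖ ^ 2
      with hg
    have hcoord : ∀ j : ℕ,
        (ContinuousLinearMap.adjoint M f : lp (fun _ : ℕ => ℂ) 2) j
          = ⟪M (lp.single 2 j (1 : ℂ)), f⟫ := by
      intro j
      have h1 := lp.inner_single_left (𝕜 := ℂ) j (1 : ℂ) (ContinuousLinearMap.adjoint M f)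
      rw [ContinuousLinearMap.adjoint_inner_right] at h1
      simpa using h1.symm
    have hkey : ∀ i : Fin m, ∀ j ∈ σ i, g j = ‖⟪f, φ i j⟫‖ ^ 2 := by
      intro i j hj
      simp only [hg, hcoord j, hMs i j hj, norm_inner_symm]
    have hsummg : Summable g := by
      have := (lp.memℓp (ContinuousLinearMap.adjoint M f)).summable
        (p := (2 : ENNReal)) (by norm_num)
      simpa [ENNReal.toReal_ofNat, Real.rpow_natCast, hg] using this
    have hnorm : ‖ContinuousLinearMap.adjoint M f‖ ^ 2 = ∑' j, g j := by
      have := lp.norm_rpow_eq_tsum (p := (2 : ENNReal)) (by norm_num)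
        (ContinuousLinearMap.adjoint M f)
      simpa [ENNReal.toReal_ofNat, Real.rpow_natCast, hg] using this
    have hpart : ∑' j, g j = ∑ i : Fin m, ∑' j : σ i, g j := by
      have hind : ∀ i : Fin m, Summable ((σ i).indicator g) := fun i =>
        hsummg.indicator _
      calc ∑' j, g j = ∑' j, ∑ i : Fin m, (σ i).indicator g j := by
            refine tsum_congr fun j => ?_
            have hjmem : j ∈ ⋃ i, σ i := by rw [hcover]; trivial
            obtain ⟨i₀, hi₀⟩ := Set.mem_iUnion.mp hjmem
            rw [Finset.sum_eq_single i₀]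
            · rw [Set.indicator_of_mem hi₀]
            · intro i _ hne
              refine Set.indicator_of_notMem ?_ _
              intro hji
              exact (hdisj hne).le_bot ⟨hji, hi₀⟩
            · intro h; exact absurd (Finset.mem_univ i₀) h
        _ = ∑ i : Fin m, ∑' j, (σ i).indicator g j := Summable.tsum_finsetSum fun i _ => hind i
        _ = ∑ i : Fin m, ∑' j : σ i, g j := by
            refine Finset.sum_congr rfl fun i _ => ?_
            rw [tsum_subtype]
    have hfinal : ∑ i : Fin m, ∑' j : σ i, g j
        = ∑ i : Fin m, ∑' j : σ i, ‖⟪f, φ i (j : ℕ)⟫‖ ^ 2 := by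
      refine Finset.sum_congr rfl fun i _ => tsum_congr fun j => hkey i j j.2
    calc A * ‖ContinuousLinearMap.adjoint K f‖ ^ 2
        ≤ ‖ContinuousLinearMap.adjoint M f‖ ^ 2 := hMlow f
      _ = ∑' j, g j := hnorm
      _ = ∑ i : Fin m, ∑' j : σ i, g j := hpart
      _ = _ := hfinal
  · -- upper bound
    rw [Finset.sum_mul]
    refine Finset.sum_le_sum fun i _ => ?_
    have h1 : ∑' j : σ i, ‖⟪f, φ i (j : ℕ)⟫‖ ^ 2 ≤ ∑' j : ℕ, ‖⟪f, φ i j⟫‖ ^ 2 := by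
      rw [tsum_subtype (σ i) (fun j => ‖⟪f, φ i j⟫‖ ^ 2)]
      refine Summable.tsum_le_tsum (fun j => ?_) (((hframe i).2.2 f).1.indicator _) ((hframe i).2.2 f).1
      exact Set.indicator_le_self' (fun j _ => by positivity) j
    exact h1.trans ((hframe i).2.2 f).2.2
end
end

section
/- For each i ∈ {1,…,m}, let {φ_{ij}}_{j∈ℕ} be a K-frame for H. Assume that for every finite subset F ⊆ ℕ, every partition {τ_i}_{i=1}^m of F, and every A > 0, there exists a partition {σ_i}_{i=1}^m of ℕ ∖ F such that the family ⋃_{i=1}^m {φ_{ij}}_{j∈σ_i∪τ_i} fails to admit A as a lower K-frame bound, i.e. there exists h ∈ H with ∑_{i=1}^m ∑_{j∈σ_i∪τ_i} |⟨h, φ_{ij}⟩|² < A‖K* h‖². Then there exists a partition {π_i}_{i=1}^m of ℕ such that the weaving ⋃_{i=1}^m {φ_{ij}}_{j∈π_i} is not a K-frame for H. -/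
/- STATEMENT 3: if for every partition {τ_i} of a finite subset of ℕ and every A > 0 there
is a partition {σ_i} of the complement such that ⋃ᵢ{φ_{ij}}_{j∈σᵢ∪τᵢ} fails to admit A as a
lower K-frame bound, then some weaving ⋃ᵢ{φ_{ij}}_{j∈πᵢ} is not a K-frame for H. -/

local notation "⟪" x ", " y "⟫" => @inner ℂ _ _ x y

noncomputable section

variable {H : Type} [NormedAddCommGroup H] [InnerProductSpace ℂ H] [CompleteSpace H]

/-- Monotonicity of sub-series of a summable nonnegative series. -/
private lemma tsum_mono_set' {f : ℕ → ℝ} (hf : Summable f) (h0 : ∀ j, 0 ≤ f j)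
    {s t : Set ℕ} (hst : s ⊆ t) :
    ∑' j : s, f j ≤ ∑' j : t, f j :=
  Summable.tsum_le_tsum_of_inj (Set.inclusion hst) (Set.inclusion_injective hst)
    (fun c _ => h0 c) (fun _ => le_rfl) (hf.subtype s) (hf.subtype t)

theorem stmt3 [TopologicalSpace.SeparableSpace H]
    (m : ℕ) (K : H →L[ℂ] H) (φ : Fin m → ℕ → H)
    (hframe : ∀ i, ∃ A B : ℝ, IsKFrameWith K (φ i) A B)
    (hyp : ∀ F : Finset ℕ, ∀ τ : Fin m → Set ℕ,
      Pairwise (Function.onFun Disjoint τ) → (⋃ i, τ i) = (F : Set ℕ) →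
      ∀ A : ℝ, 0 < A →
        ∃ σ : Fin m → Set ℕ,
          Pairwise (Function.onFun Disjoint σ) ∧ (⋃ i, σ i) = ((F : Set ℕ))ᶜ ∧
          ∃ h : H,
            ∑ i : Fin m, ∑' j : (σ i ∪ τ i : Set ℕ), ‖⟪h, φ i (j : ℕ)⟫‖ ^ 2 <
              A * ‖ContinuousLinearMap.adjoint K h‖ ^ 2) :
    ∃ π : Fin m → Set ℕ,
      Pairwise (Function.onFun Disjoint π) ∧ (⋃ i, π i) = Set.univ ∧
      ¬ ∃ A B : ℝ, 0 < A ∧ 0 < B ∧ ∀ f : H,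
          (∀ i, Summable (fun j : π i => ‖⟪f, φ i (j : ℕ)⟫‖ ^ 2)) ∧
          A * ‖ContinuousLinearMap.adjoint K f‖ ^ 2 ≤
            ∑ i : Fin m, ∑' j : π i, ‖⟪f, φ i (j : ℕ)⟫‖ ^ 2 ∧
          ∑ i : Fin m, ∑' j : π i, ‖⟪f, φ i (j : ℕ)⟫‖ ^ 2 ≤ B * ‖f‖ ^ 2 := by
  classical
  have hgsum : ∀ (i : Fin m) (f : H), Summable (fun j : ℕ => ‖⟪f, φ i j⟫‖ ^ 2) := by
    intro i f
    obtain ⟨A, B, _, _, hfr⟩ := hframe i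
    exact (hfr f).1
  have hgnn : ∀ (i : Fin m) (f : H) (j : ℕ), 0 ≤ ‖⟪f, φ i j⟫‖ ^ 2 := fun _ _ _ => sq_nonneg _
  -- the inductive step
  have step : ∀ (n : ℕ) (F : Finset ℕ) (τ : Fin m → Set ℕ),
      Pairwise (Function.onFun Disjoint τ) → (⋃ i, τ i) = (F : Set ℕ) →
      ∃ (G : Finset ℕ) (τ' : Fin m → Set ℕ),
        Pairwise (Function.onFun Disjoint τ') ∧ (⋃ i, τ' i) = (G : Set ℕ) ∧
        F ⊆ G ∧ n ∈ G ∧ (∀ i, τ i ⊆ τ' i) ∧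
        ∃ h : H, 0 < ‖ContinuousLinearMap.adjoint K h‖ ∧
          ∑ i : Fin m, (∑' j : τ' i, ‖⟪h, φ i (j : ℕ)⟫‖ ^ 2)
            + ∑ i : Fin m, (∑' j : {x : ℕ // x ∉ G}, ‖⟪h, φ i (j : ℕ)⟫‖ ^ 2)
            < (1 / (n + 1)) * ‖ContinuousLinearMap.adjoint K h‖ ^ 2 := by
    intro n F τ hdisj hcov
    have hApos : (0 : ℝ) < 1 / (n + 1) := by positivity
    obtain ⟨σ, hσd, hσc, h, hlt⟩ := hyp F τ hdisj hcov (1 / (n + 1)) hApos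
    set T := ∑ i : Fin m, ∑' j : (σ i ∪ τ i : Set ℕ), ‖⟪h, φ i (j : ℕ)⟫‖ ^ 2 with hT
    have hTnn : 0 ≤ T :=
      Finset.sum_nonneg fun i _ => tsum_nonneg fun j => hgnn i h j
    have hKh2 : 0 < ‖ContinuousLinearMap.adjoint K h‖ ^ 2 := by nlinarith [hlt]
    have hKh : 0 < ‖ContinuousLinearMap.adjoint K h‖ := by
      by_contra hc
      push_neg at hc
      have : ‖ContinuousLinearMap.adjoint K h‖ = 0 := le_antisymm hc (norm_nonneg _)
      rw [this] at hKh2; simp at hKh2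
    have hε : 0 < (1 / (n + 1)) * ‖ContinuousLinearMap.adjoint K h‖ ^ 2 - T := by linarith
    have htail : Filter.Tendsto
        (fun s : Finset ℕ =>
          ∑ i : Fin m, ∑' j : {x : ℕ // x ∉ s}, ‖⟪h, φ i (j : ℕ)⟫‖ ^ 2)
        Filter.atTop (nhds 0) := by
      have h0 : (0 : ℝ) = ∑ _i : Fin m, (0 : ℝ) := by simp
      rw [h0]
      exact tendsto_finset_sum _ fun i _ =>
        tendsto_tsum_compl_atTop_zero (fun j : ℕ => ‖⟪h, φ i j⟫‖ ^ 2)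
    obtain ⟨G₀, hG₀⟩ := Filter.eventually_atTop.mp (htail.eventually_lt_const hε)
    set G : Finset ℕ := G₀ ∪ F ∪ {n} with hG
    have hG₀G : G₀ ≤ G := by
      intro x hx
      simp [hG, Finset.mem_union, hx]
    have hσF : ∀ k, σ k ⊆ ((F : Set ℕ))ᶜ := fun k => hσc ▸ Set.subset_iUnion σ k
    have hτF : ∀ k, τ k ⊆ (F : Set ℕ) := fun k => hcov ▸ Set.subset_iUnion τ k
    refine ⟨G, fun i => (σ i ∪ τ i) ∩ (G : Set ℕ), ?_, ?_, ?_, ?_, ?_, h, hKh, ?_⟩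
    · -- pairwise disjoint
      intro i j hij
      have hd1 := hσd hij
      have hd2 := hdisj hij
      rw [Function.onFun, Set.disjoint_left]
      rintro x ⟨hx1, hxG⟩ ⟨hx2, -⟩
      rcases hx1 with hx1 | hx1 <;> rcases hx2 with hx2 | hx2
      · exact Set.disjoint_left.mp hd1 hx1 hx2
      · exact (hσF i hx1) (hτF j hx2)
      · exact (hσF j hx2) (hτF i hx1)
      · exact Set.disjoint_left.mp hd2 hx1 hx2
    · -- cover
      rw [← Set.iUnion_inter, Set.iUnion_union_distrib, hσc, hcov, Set.compl_union_self,
        Set.univ_inter]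
    · intro x hx
      simp [hG, Finset.mem_union, hx]
    · simp [hG]
    · intro i x hx
      refine ⟨Or.inr hx, ?_⟩
      have : x ∈ (F : Set ℕ) := hτF i hx
      simp [hG, Finset.mem_coe] at this ⊢
      tauto
    · -- the estimate
      have h1 : ∑ i : Fin m, (∑' j : ((σ i ∪ τ i) ∩ (G : Set ℕ) : Set ℕ),
          ‖⟪h, φ i (j : ℕ)⟫‖ ^ 2) ≤ T := by
        apply Finset.sum_le_sum
        intro i _
        exact tsum_mono_set' (hgsum i h) (hgnn i h) Set.inter_subset_left
      have h2 := hG₀ G hG₀G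
      calc ∑ i : Fin m, (∑' j : ((σ i ∪ τ i) ∩ (G : Set ℕ) : Set ℕ), ‖⟪h, φ i (j : ℕ)⟫‖ ^ 2)
            + ∑ i : Fin m, (∑' j : {x : ℕ // x ∉ G}, ‖⟪h, φ i (j : ℕ)⟫‖ ^ 2)
          ≤ T + ∑ i : Fin m, (∑' j : {x : ℕ // x ∉ G}, ‖⟪h, φ i (j : ℕ)⟫‖ ^ 2) := by
            linarith
        _ < T + ((1 / (n + 1)) * ‖ContinuousLinearMap.adjoint K h‖ ^ 2 - T) := by linarith
        _ = (1 / (n + 1)) * ‖ContinuousLinearMap.adjoint K h‖ ^ 2 := by ring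
  choose Gf τf hGd hGc hGsub hGmem hGτsub hGwit using step
  -- build the sequence of nested finite partitions
  let S : ℕ → Σ' (F : Finset ℕ) (τ : Fin m → Set ℕ),
      Pairwise (Function.onFun Disjoint τ) ∧ (⋃ i, τ i) = (F : Set ℕ) :=
    fun n => Nat.rec
      ⟨∅, fun _ => ∅, fun i j _ => by simp [Function.onFun], by simp⟩
      (fun k p => ⟨Gf k p.1 p.2.1 p.2.2.1 p.2.2.2,
                   τf k p.1 p.2.1 p.2.2.1 p.2.2.2,
                   hGd k p.1 p.2.1 p.2.2.1 p.2.2.2,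
                   hGc k p.1 p.2.1 p.2.2.1 p.2.2.2⟩) n
  have hSsucc : ∀ n, S (n + 1) = ⟨Gf n (S n).1 (S n).2.1 (S n).2.2.1 (S n).2.2.2,
      τf n (S n).1 (S n).2.1 (S n).2.2.1 (S n).2.2.2,
      hGd n (S n).1 (S n).2.1 (S n).2.2.1 (S n).2.2.2,
      hGc n (S n).1 (S n).2.1 (S n).2.2.1 (S n).2.2.2⟩ := fun n => rfl
  set Fs : ℕ → Finset ℕ := fun n => (S n).1 with hFs
  set τs : ℕ → Fin m → Set ℕ := fun n => (S n).2.1 with hτs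
  have hτstep : ∀ n i, τs n i ⊆ τs (n + 1) i := by
    intro n i
    exact hGτsub n (S n).1 (S n).2.1 (S n).2.2.1 (S n).2.2.2 i
  have hmono : ∀ (i : Fin m) (a b : ℕ), a ≤ b → τs a i ⊆ τs b i := by
    intro i a b hab
    induction b, hab using Nat.le_induction with
    | base => exact subset_rfl
    | succ b hab ih => exact ih.trans (hτstep b i)
  set π : Fin m → Set ℕ := fun i => ⋃ n, τs n i with hπ
  have hπd : Pairwise (Function.onFun Disjoint π) := by
    intro i j hij
    rw [Function.onFun, Set.disjoint_left]
    rintro x hxi hxj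
    obtain ⟨a, hxa⟩ := Set.mem_iUnion.mp hxi
    obtain ⟨b, hxb⟩ := Set.mem_iUnion.mp hxj
    have hxa' := hmono i a (max a b) (le_max_left _ _) hxa
    have hxb' := hmono j b (max a b) (le_max_right _ _) hxb
    exact Set.disjoint_left.mp ((S (max a b)).2.2.1 hij) hxa' hxb'
  have hπc : (⋃ i, π i) = Set.univ := by
    ext x
    simp only [Set.mem_univ, iff_true]
    have hx : x ∈ Fs (x + 1) := hGmem x (S x).1 (S x).2.1 (S x).2.2.1 (S x).2.2.2
    have hx' : x ∈ ⋃ i, τs (x + 1) i := (S (x + 1)).2.2.2 ▸ Finset.mem_coe.mpr hx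
    obtain ⟨i, hi⟩ := Set.mem_iUnion.mp hx'
    exact Set.mem_iUnion.mpr ⟨i, Set.mem_iUnion.mpr ⟨x + 1, hi⟩⟩
  have hkey : ∀ (n : ℕ) (i : Fin m), π i ∩ (Fs n : Set ℕ) = τs n i := by
    intro n i
    apply Set.Subset.antisymm
    · rintro x ⟨hxπ, hxF⟩
      obtain ⟨a, hxa⟩ := Set.mem_iUnion.mp hxπ
      rcases le_total a n with hle | hle
      · exact hmono i a n hle hxa
      · have hx' : x ∈ ⋃ j, τs n j := (S n).2.2.2 ▸ hxF
        obtain ⟨j, hj⟩ := Set.mem_iUnion.mp hx'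
        rcases eq_or_ne j i with rfl | hne
        · exact hj
        · exact absurd hxa (Set.disjoint_left.mp ((S a).2.2.1 hne) (hmono j n a hle hj))
    · intro x hx
      exact ⟨Set.mem_iUnion.mpr ⟨n, hx⟩, (S n).2.2.2 ▸ Set.mem_iUnion.mpr ⟨i, hx⟩⟩
  refine ⟨π, hπd, hπc, ?_⟩
  rintro ⟨A, B, hA, hB, hf⟩
  obtain ⟨n, hn⟩ := exists_nat_one_div_lt hA
  obtain ⟨h, hKh, hlt⟩ := hGwit n (S n).1 (S n).2.1 (S n).2.2.1 (S n).2.2.2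
  have hlt' : ∑ i : Fin m, (∑' j : τs (n + 1) i, ‖⟪h, φ i (j : ℕ)⟫‖ ^ 2)
      + ∑ i : Fin m, (∑' j : {x : ℕ // x ∉ Fs (n + 1)}, ‖⟪h, φ i (j : ℕ)⟫‖ ^ 2)
      < (1 / (n + 1)) * ‖ContinuousLinearMap.adjoint K h‖ ^ 2 := hlt
  have hlow := (hf h).2.1
  have hsplit : ∀ i : Fin m, (∑' j : π i, ‖⟪h, φ i (j : ℕ)⟫‖ ^ 2) ≤
      (∑' j : τs (n + 1) i, ‖⟪h, φ i (j : ℕ)⟫‖ ^ 2)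
        + ∑' j : {x : ℕ // x ∉ Fs (n + 1)}, ‖⟪h, φ i (j : ℕ)⟫‖ ^ 2 := by
    intro i
    have hdecomp : π i = (π i ∩ (Fs (n + 1) : Set ℕ)) ∪ (π i \ (Fs (n + 1) : Set ℕ)) :=
      (Set.inter_union_diff _ _).symm
    have hdisj' : Disjoint (π i ∩ (Fs (n + 1) : Set ℕ)) (π i \ (Fs (n + 1) : Set ℕ)) :=
      Set.disjoint_left.mpr fun x hx hx2 => hx2.2 hx.2
    calc (∑' j : π i, ‖⟪h, φ i (j : ℕ)⟫‖ ^ 2)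
        = (∑' j : (π i ∩ (Fs (n + 1) : Set ℕ) : Set ℕ), ‖⟪h, φ i (j : ℕ)⟫‖ ^ 2)
          + ∑' j : (π i \ (Fs (n + 1) : Set ℕ) : Set ℕ), ‖⟪h, φ i (j : ℕ)⟫‖ ^ 2 := by
          conv_lhs => rw [hdecomp]
          exact Summable.tsum_union_disjoint hdisj' ((hgsum i h).subtype _) ((hgsum i h).subtype _)
      _ ≤ (∑' j : τs (n + 1) i, ‖⟪h, φ i (j : ℕ)⟫‖ ^ 2)
          + ∑' j : {x : ℕ // x ∉ Fs (n + 1)}, ‖⟪h, φ i (j : ℕ)⟫‖ ^ 2 := by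
          apply add_le_add
          · rw [hkey (n + 1) i]
          · exact tsum_mono_set' (hgsum i h) (hgnn i h)
              (fun x hx => by exact hx.2)
  have hsum_le : ∑ i : Fin m, (∑' j : π i, ‖⟪h, φ i (j : ℕ)⟫‖ ^ 2) ≤
      ∑ i : Fin m, (∑' j : τs (n + 1) i, ‖⟪h, φ i (j : ℕ)⟫‖ ^ 2)
        + ∑ i : Fin m, (∑' j : {x : ℕ // x ∉ Fs (n + 1)}, ‖⟪h, φ i (j : ℕ)⟫‖ ^ 2) := by
    rw [← Finset.sum_add_distrib]
    exact Finset.sum_le_sum fun i _ => hsplit i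
  have hKh2 : 0 < ‖ContinuousLinearMap.adjoint K h‖ ^ 2 := by positivity
  have hfinal : A * ‖ContinuousLinearMap.adjoint K h‖ ^ 2 <
      A * ‖ContinuousLinearMap.adjoint K h‖ ^ 2 := by
    calc A * ‖ContinuousLinearMap.adjoint K h‖ ^ 2
        ≤ ∑ i : Fin m, (∑' j : π i, ‖⟪h, φ i (j : ℕ)⟫‖ ^ 2) := hlow
      _ ≤ _ := hsum_le
      _ < (1 / (n + 1)) * ‖ContinuousLinearMap.adjoint K h‖ ^ 2 := hlt'
      _ < A * ‖ContinuousLinearMap.adjoint K h‖ ^ 2 := by nlinarith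
  exact lt_irrefl _ hfinal
end
end

section
/- Suppose the family of K-frames {φ_{ij}}_{j∈ℕ} (i = 1,…,m) for H is weakly K-woven. Then there exist a finite subset F ⊆ ℕ, a partition {τ_i}_{i=1}^m of F, and a constant A > 0 such that for every partition {σ_i}_{i=1}^m of ℕ ∖ F, the family ⋃_{i=1}^m {φ_{ij}}_{j∈σ_i∪τ_i} has lower K-frame bound A, i.e. ∑_{i=1}^m ∑_{j∈σ_i∪τ_i} |⟨f, φ_{ij}⟩|² ≥ A‖K* f‖² for all f ∈ H. -/
/- STATEMENT 4: if a family of K-frames is weakly K-woven, then there are a finite set F,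
a partition {τ_i} of F and A > 0 such that for every partition {σ_i} of ℕ ∖ F the family
⋃ᵢ{φ_{ij}}_{j∈σᵢ∪τᵢ} has lower K-frame bound A. -/

local notation "⟪" x ", " y "⟫" => @inner ℂ _ _ x y

noncomputable section

variable {H : Type} [NormedAddCommGroup H] [InnerProductSpace ℂ H] [CompleteSpace H]

lemma tsum_sub_mono' {g : ℕ → ℝ} (hg : ∀ j, 0 ≤ g j) (hsum : Summable g) {s t : Set ℕ}
    (hst : s ⊆ t) : ∑' j : s, g j ≤ ∑' j : t, g j := by
  rw [tsum_subtype, tsum_subtype]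
  exact Summable.tsum_le_tsum (fun j => Set.indicator_le_indicator_of_subset hst hg j)
    (hsum.indicator s) (hsum.indicator t)

lemma tsum_union_le'' {g : ℕ → ℝ} (hg : ∀ j, 0 ≤ g j) (hsum : Summable g) (s t : Set ℕ) :
    ∑' j : ↥(s ∪ t), g j ≤ (∑' j : s, g j) + ∑' j : t, g j := by
  rw [tsum_subtype, tsum_subtype, tsum_subtype, ← Summable.tsum_add (hsum.indicator s) (hsum.indicator t)]
  refine Summable.tsum_le_tsum (fun j => ?_) (hsum.indicator _) ((hsum.indicator s).add (hsum.indicator t))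
  classical
  by_cases hjs : j ∈ s <;> by_cases hjt : j ∈ t <;>
    simp [Set.indicator_apply, hjs, hjt, hg j, le_add_of_nonneg_right, le_add_of_nonneg_left]

theorem stmt4 [TopologicalSpace.SeparableSpace H]
    (m : ℕ) (K : H →L[ℂ] H) (φ : Fin m → ℕ → H)
    (hframe : ∀ i, ∃ A B : ℝ, IsKFrameWith K (φ i) A B)
    -- the family is weakly K-woven
    (hweak : ∀ σ : Fin m → Set ℕ,
      Pairwise (Function.onFun Disjoint σ) → (⋃ i, σ i) = Set.univ →
      ∃ A B : ℝ, 0 < A ∧ 0 < B ∧ ∀ f : H,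
        (∀ i, Summable (fun j : σ i => ‖⟪f, φ i (j : ℕ)⟫‖ ^ 2)) ∧
        A * ‖ContinuousLinearMap.adjoint K f‖ ^ 2 ≤
          ∑ i : Fin m, ∑' j : σ i, ‖⟪f, φ i (j : ℕ)⟫‖ ^ 2 ∧
        ∑ i : Fin m, ∑' j : σ i, ‖⟪f, φ i (j : ℕ)⟫‖ ^ 2 ≤ B * ‖f‖ ^ 2) :
    ∃ F : Finset ℕ, ∃ τ : Fin m → Set ℕ,
      Pairwise (Function.onFun Disjoint τ) ∧ (⋃ i, τ i) = (F : Set ℕ) ∧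
      ∃ A : ℝ, 0 < A ∧
        ∀ σ : Fin m → Set ℕ,
          Pairwise (Function.onFun Disjoint σ) → (⋃ i, σ i) = ((F : Set ℕ))ᶜ →
          ∀ f : H,
            A * ‖ContinuousLinearMap.adjoint K f‖ ^ 2 ≤
              ∑ i : Fin m, ∑' j : (σ i ∪ τ i : Set ℕ), ‖⟪f, φ i (j : ℕ)⟫‖ ^ 2 := by
  by_contra hcon
  push_neg at hcon
  have hSum : ∀ (f : H) (i : Fin m), Summable (fun j : ℕ => ‖⟪f, φ i j⟫‖ ^ 2) := by
    intro f i
    obtain ⟨A, B, hKF⟩ := hframe i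
    exact (hKF.2.2 f).1
  have hg0' : ∀ (f : H) (i : Fin m) (j : ℕ), (0:ℝ) ≤ ‖⟪f, φ i j⟫‖ ^ 2 :=
    fun f i j => pow_nonneg (norm_nonneg _) 2
  -- the one-step construction
  have hstep : ∀ (n : ℕ) (F : Finset ℕ) (τ : Fin m → Set ℕ),
      ∃ (F' : Finset ℕ) (τ' : Fin m → Set ℕ) (f : H),
      (Pairwise (Function.onFun Disjoint τ) ∧ (⋃ i, τ i) = (F : Set ℕ)) →
      ((Pairwise (Function.onFun Disjoint τ') ∧ (⋃ i, τ' i) = (F' : Set ℕ)) ∧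
       F ⊆ F' ∧ n ∈ F' ∧ (∀ i, τ i ⊆ τ' i) ∧ (∀ i, τ' i ⊆ τ i ∪ (↑F : Set ℕ)ᶜ) ∧
       0 < ‖ContinuousLinearMap.adjoint K f‖ ^ 2 ∧
       (∑ i : Fin m, ∑' j : τ' i, ‖⟪f, φ i (j:ℕ)⟫‖ ^ 2)
          ≤ (1 / (n + 1)) * ‖ContinuousLinearMap.adjoint K f‖ ^ 2 ∧
       (∑ i : Fin m, ∑' j : ↥((F' : Set ℕ)ᶜ), ‖⟪f, φ i (j:ℕ)⟫‖ ^ 2)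
          ≤ (1 / (n + 1)) * ‖ContinuousLinearMap.adjoint K f‖ ^ 2) := by
    intro n F τ
    by_cases hinv : Pairwise (Function.onFun Disjoint τ) ∧ (⋃ i, τ i) = (F : Set ℕ)
    case neg => exact ⟨F, τ, 0, fun h => absurd h hinv⟩
    obtain ⟨hd, hu⟩ := hinv
    have hApos : (0:ℝ) < 1 / (n + 1) := by positivity
    obtain ⟨σ, hσd, hσu, f, hfv⟩ := hcon F τ hd hu (1 / (n + 1)) hApos
    have hτF : ∀ i, τ i ⊆ (F : Set ℕ) := fun i => hu ▸ Set.subset_iUnion τ i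
    have hσF : ∀ i, σ i ⊆ ((F : Set ℕ))ᶜ := fun i => hσu ▸ Set.subset_iUnion σ i
    have hg0 : ∀ (i : Fin m) (j : ℕ), (0:ℝ) ≤ ‖⟪f, φ i j⟫‖ ^ 2 := hg0' f
    have hsum0 : (0:ℝ) ≤ ∑ i : Fin m, ∑' (j : ↑(σ i ∪ τ i)), ‖⟪f, φ i (j:ℕ)⟫‖ ^ 2 :=
      Finset.sum_nonneg fun i _ => tsum_nonneg fun j => hg0 i j
    have hKpos : 0 < ‖ContinuousLinearMap.adjoint K f‖ ^ 2 := by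
      by_contra hK
      push_neg at hK
      nlinarith [hfv, hsum0, hApos]
    set ε := (1 / ((n:ℝ) + 1)) * ‖ContinuousLinearMap.adjoint K f‖ ^ 2 with hε
    have hεpos : 0 < ε := by positivity
    have htail := (tendsto_order.1
      (tendsto_tsum_compl_atTop_zero (fun j : ℕ => ∑ i : Fin m, ‖⟪f, φ i j⟫‖ ^ 2))).2 _ hεpos
    obtain ⟨t, ht⟩ := htail.exists
    refine ⟨F ∪ {n} ∪ t, fun i => τ i ∪ (σ i ∩ ↑(F ∪ {n} ∪ t)), f, fun _ => ?_⟩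
    set F' := F ∪ {n} ∪ t with hF'
    have hFF' : (F : Set ℕ) ⊆ (F' : Set ℕ) := by
      intro x hx; simp only [hF', Finset.coe_union, Set.mem_union]; exact Or.inl (Or.inl hx)
    have htF' : ((F' : Set ℕ))ᶜ ⊆ ((t : Set ℕ))ᶜ := by
      intro x hx hxt
      exact hx (by simp only [hF', Finset.coe_union, Set.mem_union]; exact Or.inr hxt)
    refine ⟨⟨?_, ?_⟩, ?_, ?_, fun i => Set.subset_union_left, fun i => ?_, hKpos, ?_, ?_⟩
    · intro i i' hii'
      have h1 := Set.disjoint_left.1 (hd hii')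
      have h2 := Set.disjoint_left.1 (hσd hii')
      refine Set.disjoint_left.2 fun x hx hx' => ?_
      rcases hx with hx | ⟨hx, _⟩ <;> rcases hx' with hx' | ⟨hx', _⟩
      · exact h1 hx hx'
      · exact hσF i' hx' (hτF i hx)
      · exact hσF i hx (hτF i' hx')
      · exact h2 hx hx'
    · rw [Set.iUnion_union_distrib, hu, ← Set.iUnion_inter, hσu]
      ext x
      constructor
      · rintro (hx | ⟨-, hx⟩)
        · exact hFF' hx
        · exact hx
      · intro hx
        by_cases hxF : x ∈ (F : Set ℕ)
        · exact Or.inl hxF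
        · exact Or.inr ⟨hxF, hx⟩
    · exact (Finset.subset_union_left).trans Finset.subset_union_left
    · simp [hF']
    · exact Set.union_subset_union_right _ ((Set.inter_subset_left).trans (hσF i))
    · refine le_trans (Finset.sum_le_sum fun i _ => ?_) hfv.le
      refine tsum_sub_mono' (hg0 i) (hSum f i) ?_
      exact Set.union_subset (Set.subset_union_right)
        ((Set.inter_subset_left).trans Set.subset_union_left)
    · have step1 : ∀ i : Fin m,
          (∑' j : ↥((F' : Set ℕ)ᶜ), ‖⟪f, φ i (j:ℕ)⟫‖ ^ 2)
            ≤ ∑' j : ↥((t : Set ℕ)ᶜ), ‖⟪f, φ i (j:ℕ)⟫‖ ^ 2 :=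
        fun i => tsum_sub_mono' (hg0 i) (hSum f i) htF'
      calc (∑ i : Fin m, ∑' j : ↥((F' : Set ℕ)ᶜ), ‖⟪f, φ i (j:ℕ)⟫‖ ^ 2)
          ≤ ∑ i : Fin m, ∑' j : ↥((t : Set ℕ)ᶜ), ‖⟪f, φ i (j:ℕ)⟫‖ ^ 2 :=
            Finset.sum_le_sum fun i _ => step1 i
        _ = ∑' j : ↥((t : Set ℕ)ᶜ), ∑ i : Fin m, ‖⟪f, φ i (j:ℕ)⟫‖ ^ 2 :=
            (Summable.tsum_finsetSum fun i _ => (hSum f i).subtype _).symm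
        _ ≤ ε := le_of_lt ht
  -- choose the step data
  choose F'f τ'f ff hspec using hstep
  -- build the chain
  let chain : ℕ → Finset ℕ × (Fin m → Set ℕ) := fun n =>
    Nat.rec ((∅ : Finset ℕ), fun _ => (∅ : Set ℕ))
      (fun k s => (F'f k s.1 s.2, τ'f k s.1 s.2)) n
  have hinv : ∀ n, Pairwise (Function.onFun Disjoint (chain n).2) ∧
      (⋃ i, (chain n).2 i) = ((chain n).1 : Set ℕ) := by
    intro n
    induction n with
    | zero =>
      constructor
      · intro i j _
        show Disjoint (∅ : Set ℕ) (∅ : Set ℕ)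
        simp
      · show (⋃ _ : Fin m, (∅ : Set ℕ)) = (((∅ : Finset ℕ) : Set ℕ))
        simp
    | succ k ih =>
      exact (hspec k (chain k).1 (chain k).2 ih).1
  set Fs : ℕ → Finset ℕ := fun n => (chain n).1 with hFs
  set τs : ℕ → Fin m → Set ℕ := fun n => (chain n).2 with hτs
  set fs : ℕ → H := fun n => ff n (Fs n) (τs n) with hfsdef
  have hspec' : ∀ n,
      Fs n ⊆ Fs (n+1) ∧ n ∈ Fs (n+1) ∧ (∀ i, τs n i ⊆ τs (n+1) i) ∧
      (∀ i, τs (n+1) i ⊆ τs n i ∪ ((Fs n : Set ℕ))ᶜ) ∧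
      0 < ‖ContinuousLinearMap.adjoint K (fs n)‖ ^ 2 ∧
      (∑ i : Fin m, ∑' j : τs (n+1) i, ‖⟪fs n, φ i (j:ℕ)⟫‖ ^ 2)
        ≤ (1 / (n + 1)) * ‖ContinuousLinearMap.adjoint K (fs n)‖ ^ 2 ∧
      (∑ i : Fin m, ∑' j : ↥((Fs (n+1) : Set ℕ)ᶜ), ‖⟪fs n, φ i (j:ℕ)⟫‖ ^ 2)
        ≤ (1 / (n + 1)) * ‖ContinuousLinearMap.adjoint K (fs n)‖ ^ 2 := by
    intro n
    exact (hspec n (Fs n) (τs n) (hinv n)).2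
  -- monotonicity
  have hFmono : Monotone Fs :=
    monotone_nat_of_le_succ fun n => (hspec' n).1
  have hτmono : ∀ i : Fin m, Monotone (fun n => τs n i) := fun i =>
    monotone_nat_of_le_succ fun n => (hspec' n).2.2.1 i
  -- key containment
  have hkey : ∀ (n k : ℕ), n ≤ k → ∀ i, τs k i ∩ (Fs n : Set ℕ) ⊆ τs n i := by
    intro n k hnk
    induction hnk with
    | refl => exact fun i x hx => hx.1
    | @step k' hk' ih =>
      intro i x hx
      rcases (hspec' k').2.2.2.1 i hx.1 with hx' | hx'
      · exact ih i ⟨hx', hx.2⟩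
      · exact absurd (hFmono hk' hx.2) hx'
  -- the limiting partition
  set σf : Fin m → Set ℕ := fun i => ⋃ n, τs n i with hσf
  have hσd : Pairwise (Function.onFun Disjoint σf) := by
    intro i i' hii'
    refine Set.disjoint_left.2 fun x hx hx' => ?_
    obtain ⟨a, ha⟩ := Set.mem_iUnion.1 hx
    obtain ⟨b, hb⟩ := Set.mem_iUnion.1 hx'
    have hac : τs a i ⊆ τs (max a b) i := hτmono i (le_max_left a b)
    have hbc : τs b i' ⊆ τs (max a b) i' := hτmono i' (le_max_right a b)
    exact Set.disjoint_left.1 ((hinv (max a b)).1 hii') (hac ha) (hbc hb)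
  have hσu : (⋃ i, σf i) = Set.univ := by
    ext x
    simp only [Set.mem_univ, iff_true, Set.mem_iUnion]
    have hxF : x ∈ (Fs (x+1) : Set ℕ) := (hspec' x).2.1
    rw [← (hinv (x+1)).2] at hxF
    obtain ⟨i, hi⟩ := Set.mem_iUnion.1 hxF
    exact ⟨i, Set.mem_iUnion.2 ⟨x+1, hi⟩⟩
  have hσcap : ∀ (n : ℕ) (i : Fin m),
      σf i ⊆ τs (n+1) i ∪ ((Fs (n+1) : Set ℕ))ᶜ := by
    intro n i x hx
    by_cases hxF : x ∈ (Fs (n+1) : Set ℕ)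
    · left
      obtain ⟨k, hk⟩ := Set.mem_iUnion.1 hx
      rcases le_total k (n+1) with hkn | hkn
      · exact hτmono i hkn hk
      · exact hkey (n+1) k hkn i ⟨hk, hxF⟩
    · exact Or.inr hxF
  -- apply weak wovenness to the limiting partition
  obtain ⟨A, B, hA, hB, hfr⟩ := hweak σf hσd hσu
  -- derive A ≤ 2/(n+1) for all n
  have hAle : ∀ n : ℕ, A ≤ 2 / (n + 1) := by
    intro n
    have hKpos := (hspec' n).2.2.2.2.1
    have hlow := (hfr (fs n)).2.1
    have hup : (∑ i : Fin m, ∑' j : σf i, ‖⟪fs n, φ i (j:ℕ)⟫‖ ^ 2)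
        ≤ (2 / (n + 1)) * ‖ContinuousLinearMap.adjoint K (fs n)‖ ^ 2 := by
      have hbd : ∀ i : Fin m, (∑' j : σf i, ‖⟪fs n, φ i (j:ℕ)⟫‖ ^ 2)
          ≤ (∑' j : τs (n+1) i, ‖⟪fs n, φ i (j:ℕ)⟫‖ ^ 2)
            + ∑' j : ↥((Fs (n+1) : Set ℕ)ᶜ), ‖⟪fs n, φ i (j:ℕ)⟫‖ ^ 2 := by
        intro i
        refine le_trans (tsum_sub_mono' (hg0' (fs n) i) (hSum (fs n) i) (hσcap n i)) ?_
        exact tsum_union_le'' (hg0' (fs n) i) (hSum (fs n) i) _ _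
      calc (∑ i : Fin m, ∑' j : σf i, ‖⟪fs n, φ i (j:ℕ)⟫‖ ^ 2)
          ≤ ∑ i : Fin m, ((∑' j : τs (n+1) i, ‖⟪fs n, φ i (j:ℕ)⟫‖ ^ 2)
              + ∑' j : ↥((Fs (n+1) : Set ℕ)ᶜ), ‖⟪fs n, φ i (j:ℕ)⟫‖ ^ 2) :=
            Finset.sum_le_sum fun i _ => hbd i
        _ = (∑ i : Fin m, ∑' j : τs (n+1) i, ‖⟪fs n, φ i (j:ℕ)⟫‖ ^ 2)
              + ∑ i : Fin m, ∑' j : ↥((Fs (n+1) : Set ℕ)ᶜ), ‖⟪fs n, φ i (j:ℕ)⟫‖ ^ 2 :=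
            Finset.sum_add_distrib
        _ ≤ (1 / (n + 1)) * ‖ContinuousLinearMap.adjoint K (fs n)‖ ^ 2
              + (1 / (n + 1)) * ‖ContinuousLinearMap.adjoint K (fs n)‖ ^ 2 :=
            add_le_add ((hspec' n).2.2.2.2.2.1) ((hspec' n).2.2.2.2.2.2)
        _ = (2 / (n + 1)) * ‖ContinuousLinearMap.adjoint K (fs n)‖ ^ 2 := by ring
    have := le_trans hlow hup
    have hn1 : (0:ℝ) < (n:ℝ) + 1 := by positivity
    nlinarith [hKpos, this]
  -- contradiction
  obtain ⟨n, hn⟩ := exists_nat_gt (2 / A)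
  have h1 := hAle n
  have hn1 : (0:ℝ) < (n:ℝ) + 1 := by positivity
  have h2 : 2 / A < (n:ℝ) + 1 := lt_trans hn (by linarith)
  have h3 : 2 < A * ((n:ℝ) + 1) := by
    rw [div_lt_iff₀ hA] at h2
    linarith [h2]
  have h4 : A * ((n:ℝ) + 1) ≤ 2 := by
    rw [le_div_iff₀ hn1] at h1
    linarith [h1]
  linarith
end
end

section
/- Let {φ_{ij}}_{j∈ℕ} (i = 1,…,m) be a family of K-frames for H that is K-woven with universal K-frame bounds A and B. Then for every bounded linear operator U : H → H, the family {U(φ_{ij})}_{j∈ℕ} (i = 1,…,m) is UK-woven with universal bounds A and B‖U*‖²; that is, for every partition {σ_i}_{i=1}^m of ℕ and every f ∈ H, A‖(UK)* f‖² ≤ ∑_{i=1}^m ∑_{j∈σ_i} |⟨f, U(φ_{ij})⟩|² ≤ B‖U*‖²‖f‖². -/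
/- STATEMENT 7: if a family of K-frames is K-woven with universal bounds A, B, then for any
bounded operator U the family {U φ_{ij}} is UK-woven with universal bounds A and B‖U*‖². -/

local notation "⟪" x ", " y "⟫" => @inner ℂ _ _ x y

noncomputable section

variable {H : Type} [NormedAddCommGroup H] [InnerProductSpace ℂ H] [CompleteSpace H]

theorem stmt7 [TopologicalSpace.SeparableSpace H]
    (m : ℕ) (K : H →L[ℂ] H) (φ : Fin m → ℕ → H)
    (hframe : ∀ i, ∃ A B : ℝ, IsKFrameWith K (φ i) A B)
    (A B : ℝ) (hA : 0 < A) (hB : 0 < B)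
    -- the family is K-woven with universal bounds A and B
    (hwoven : ∀ σ : Fin m → Set ℕ,
      Pairwise (Function.onFun Disjoint σ) → (⋃ i, σ i) = Set.univ →
      ∀ f : H,
        (∀ i, Summable (fun j : σ i => ‖⟪f, φ i (j : ℕ)⟫‖ ^ 2)) ∧
        A * ‖ContinuousLinearMap.adjoint K f‖ ^ 2 ≤
          ∑ i : Fin m, ∑' j : σ i, ‖⟪f, φ i (j : ℕ)⟫‖ ^ 2 ∧
        ∑ i : Fin m, ∑' j : σ i, ‖⟪f, φ i (j : ℕ)⟫‖ ^ 2 ≤ B * ‖f‖ ^ 2)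
    (U : H →L[ℂ] H) :
    ∀ σ : Fin m → Set ℕ,
      Pairwise (Function.onFun Disjoint σ) → (⋃ i, σ i) = Set.univ →
      ∀ f : H,
        (∀ i, Summable (fun j : σ i => ‖⟪f, U (φ i (j : ℕ))⟫‖ ^ 2)) ∧
        A * ‖ContinuousLinearMap.adjoint (U.comp K) f‖ ^ 2 ≤
          ∑ i : Fin m, ∑' j : σ i, ‖⟪f, U (φ i (j : ℕ))⟫‖ ^ 2 ∧
        ∑ i : Fin m, ∑' j : σ i, ‖⟪f, U (φ i (j : ℕ))⟫‖ ^ 2 ≤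
          B * ‖ContinuousLinearMap.adjoint U‖ ^ 2 * ‖f‖ ^ 2 := by
  intro σ hdisj hcover f
  set Us := ContinuousLinearMap.adjoint U
  obtain ⟨hsum, hlow, hhigh⟩ := hwoven σ hdisj hcover (Us f)
  have hkey : ∀ (i : Fin m) (j : ℕ), ‖⟪f, U (φ i j)⟫‖ = ‖⟪Us f, φ i j⟫‖ := by
    intro i j
    rw [ContinuousLinearMap.adjoint_inner_left]
  have hrw : ∀ i : Fin m, (∑' j : σ i, ‖⟪f, U (φ i (j : ℕ))⟫‖ ^ 2)
      = ∑' j : σ i, ‖⟪Us f, φ i (j : ℕ)⟫‖ ^ 2 := by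
    intro i; exact tsum_congr fun j => by rw [hkey]
  have hadj : ContinuousLinearMap.adjoint (U.comp K) f
      = ContinuousLinearMap.adjoint K (Us f) := by
    rw [ContinuousLinearMap.adjoint_comp]; rfl
  refine ⟨fun i => ?_, ?_, ?_⟩
  · have := hsum i
    refine this.congr fun j => ?_
    rw [hkey]
  · rw [hadj]
    calc A * ‖ContinuousLinearMap.adjoint K (Us f)‖ ^ 2
        ≤ ∑ i : Fin m, ∑' j : σ i, ‖⟪Us f, φ i (j : ℕ)⟫‖ ^ 2 := hlow
      _ = ∑ i : Fin m, ∑' j : σ i, ‖⟪f, U (φ i (j : ℕ))⟫‖ ^ 2 := by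
          exact Finset.sum_congr rfl fun i _ => (hrw i).symm
  · calc ∑ i : Fin m, ∑' j : σ i, ‖⟪f, U (φ i (j : ℕ))⟫‖ ^ 2
        = ∑ i : Fin m, ∑' j : σ i, ‖⟪Us f, φ i (j : ℕ)⟫‖ ^ 2 :=
          Finset.sum_congr rfl fun i _ => hrw i
      _ ≤ B * ‖Us f‖ ^ 2 := hhigh
      _ ≤ B * (‖Us‖ * ‖f‖) ^ 2 := by
          have h := Us.le_opNorm f
          have : ‖Us f‖ ^ 2 ≤ (‖Us‖ * ‖f‖) ^ 2 :=
            pow_le_pow_left₀ (norm_nonneg _) h 2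
          nlinarith
      _ = B * ‖Us‖ ^ 2 * ‖f‖ ^ 2 := by ring
end
end

section
/- Let {φ_{ij}}_{j∈ℕ} (i = 1,…,m) be a family of K-frames for H. Then the family is K-woven if and only if for every bounded linear operator U : H → H, the family {U(φ_{ij})}_{j∈ℕ} (i = 1,…,m) is UK-woven. -/
/- STATEMENT 8: a family of K-frames is K-woven iff for every bounded operator U the
family {U φ_{ij}} is UK-woven. -/

local notation "⟪" x ", " y "⟫" => @inner ℂ _ _ x y

noncomputable section

variable {H : Type} [NormedAddCommGroup H] [InnerProductSpace ℂ H] [CompleteSpace H]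

/-- The family `φ : Fin m → ℕ → H` is `K`-woven: there are universal constants `A`, `B`
such that every weaving along a partition of ℕ is a `K`-frame with bounds `A`, `B`. -/
def IsKWoven {m : ℕ} (K : H →L[ℂ] H) (φ : Fin m → ℕ → H) : Prop :=
  ∃ A B : ℝ, 0 < A ∧ 0 < B ∧
    ∀ σ : Fin m → Set ℕ,
      Pairwise (Function.onFun Disjoint σ) → (⋃ i, σ i) = Set.univ →
      ∀ f : H,
        (∀ i, Summable (fun j : σ i => ‖⟪f, φ i (j : ℕ)⟫‖ ^ 2)) ∧
        A * ‖ContinuousLinearMap.adjoint K f‖ ^ 2 ≤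
          ∑ i : Fin m, ∑' j : σ i, ‖⟪f, φ i (j : ℕ)⟫‖ ^ 2 ∧
        ∑ i : Fin m, ∑' j : σ i, ‖⟪f, φ i (j : ℕ)⟫‖ ^ 2 ≤ B * ‖f‖ ^ 2

theorem stmt8 [TopologicalSpace.SeparableSpace H]
    (m : ℕ) (K : H →L[ℂ] H) (φ : Fin m → ℕ → H)
    (hframe : ∀ i, ∃ A B : ℝ, IsKFrameWith K (φ i) A B) :
    IsKWoven K φ ↔
      ∀ U : H →L[ℂ] H, IsKWoven (U.comp K) (fun i j => U (φ i j)) := by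
  constructor
  · rintro ⟨A, B, hA, hB, h⟩ U
    refine ⟨A, B * (‖U‖ + 1) ^ 2, hA, by positivity, ?_⟩
    intro σ hσ hcov f
    obtain ⟨hsum, hlow, hup⟩ := h σ hσ hcov (ContinuousLinearMap.adjoint U f)
    have hinner : ∀ (i : Fin m) (j : ℕ),
        ⟪f, U (φ i j)⟫ = ⟪ContinuousLinearMap.adjoint U f, φ i j⟫ := fun i j =>
      (ContinuousLinearMap.adjoint_inner_left U (φ i j) f).symm
    have hadj : ContinuousLinearMap.adjoint (U.comp K) f =
        ContinuousLinearMap.adjoint K (ContinuousLinearMap.adjoint U f) := by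
      rw [ContinuousLinearMap.adjoint_comp]; rfl
    refine ⟨?_, ?_, ?_⟩
    · intro i
      simpa only [hinner] using hsum i
    · simp only [hinner, hadj]
      exact hlow
    · have hUf : ‖ContinuousLinearMap.adjoint U f‖ ≤ ‖U‖ * ‖f‖ := by
        calc ‖ContinuousLinearMap.adjoint U f‖
            ≤ ‖ContinuousLinearMap.adjoint U‖ * ‖f‖ :=
              (ContinuousLinearMap.adjoint U).le_opNorm f
          _ = ‖U‖ * ‖f‖ := by rw [ContinuousLinearMap.adjoint.norm_map]
      simp only [hinner]
      refine hup.trans ?_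
      have h1 : ‖ContinuousLinearMap.adjoint U f‖ ^ 2 ≤ (‖U‖ * ‖f‖) ^ 2 := by
        apply pow_le_pow_left₀ (norm_nonneg _) hUf
      calc B * ‖ContinuousLinearMap.adjoint U f‖ ^ 2
          ≤ B * (‖U‖ * ‖f‖) ^ 2 := mul_le_mul_of_nonneg_left h1 hB.le
        _ ≤ B * (‖U‖ + 1) ^ 2 * ‖f‖ ^ 2 := by
            nlinarith [mul_nonneg (mul_nonneg hB.le (norm_nonneg U)) (sq_nonneg ‖f‖),
              mul_nonneg hB.le (sq_nonneg ‖f‖)]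
  · intro h
    have h1 := h 1
    simpa [ContinuousLinearMap.one_def] using h1
end
end

section
/- Let {φ_j}_{j∈ℕ} be a K-frame for H with lower K-frame bound A₁ whose vectors are pairwise orthogonal and satisfy ‖φ_j‖² > α > 0 for all j ∈ ℕ. Then for every f ∈ H, ‖∑_{j∈ℕ} ⟨f, φ_j⟩ φ_j‖ ≥ √(αA₁) ‖K* f‖. -/
/- STATEMENT 11: for a K-frame with lower bound A₁ whose vectors are pairwise orthogonal
with ‖φⱼ‖² > α > 0, one has ‖∑ⱼ ⟨f, φⱼ⟩ φⱼ‖ ≥ √(αA₁) ‖K* f‖ for every f. -/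

local notation "⟪" x ", " y "⟫" => @inner ℂ _ _ x y

noncomputable section

variable {H : Type} [NormedAddCommGroup H] [InnerProductSpace ℂ H] [CompleteSpace H]

/-- Pythagoras for a tsum over an orthogonal family. -/
lemma aux_norm_sq_tsum {ι : Type*} {G : ι → Type*} [∀ i, NormedAddCommGroup (G i)]
    [∀ i, InnerProductSpace ℂ (G i)] {V : ∀ i, G i →ₗᵢ[ℂ] H}
    (hV : OrthogonalFamily ℂ G V) (f : ∀ i, G i)
    (hsq : Summable fun i => ‖f i‖ ^ 2) :
    ‖∑' i, V i (f i)‖ ^ 2 = ∑' i, ‖f i‖ ^ 2 := by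
  have hsum : Summable fun i => V i (f i) :=
    (hV.summable_iff_norm_sq_summable f).2 hsq
  have h1 : Filter.Tendsto (fun s : Finset ι => ‖∑ i ∈ s, V i (f i)‖ ^ 2)
      Filter.atTop (nhds (‖∑' i, V i (f i)‖ ^ 2)) :=
    ((continuous_norm.pow 2).continuousAt).tendsto.comp hsum.hasSum
  have h2 : HasSum (fun i => ‖f i‖ ^ 2) (‖∑' i, V i (f i)‖ ^ 2) := by
    have : (fun s : Finset ι => ∑ i ∈ s, ‖f i‖ ^ 2) =
        fun s : Finset ι => ‖∑ i ∈ s, V i (f i)‖ ^ 2 := by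
      funext s; exact (hV.norm_sum f s).symm
    unfold HasSum
    rw [this]
    exact h1
  exact h2.tsum_eq.symm

theorem stmt11 [TopologicalSpace.SeparableSpace H]
    (K : H →L[ℂ] H) (φ : ℕ → H) (A₁ B₁ : ℝ)
    (hφ : IsKFrameWith K φ A₁ B₁)
    (horth : ∀ j k : ℕ, j ≠ k → ⟪φ j, φ k⟫ = 0)
    (α : ℝ) (hα : 0 < α) (hnorm : ∀ j : ℕ, α < ‖φ j‖ ^ 2) :
    ∀ f : H,
      Real.sqrt (α * A₁) * ‖ContinuousLinearMap.adjoint K f‖ ≤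
        ‖∑' j : ℕ, ⟪f, φ j⟫ • φ j‖ := by
  obtain ⟨hA, hB, hfr⟩ := hφ
  intro f
  set c : ℕ → ℂ := fun j => ⟪f, φ j⟫ with hc
  -- positivity of norms
  have hφpos : ∀ j, (0:ℝ) < ‖φ j‖ := fun j => by
    nlinarith [hnorm j, hα, norm_nonneg (φ j)]
  have hφne : ∀ j, φ j ≠ 0 := fun j h => by
    have := hφpos j; rw [h, norm_zero] at this; exact lt_irrefl 0 this
  -- upper bound on ‖φ k‖²
  have hBnorm : ∀ k, ‖φ k‖ ^ 2 ≤ B₁ := by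
    intro k
    obtain ⟨hs, _, hub⟩ := hfr (φ k)
    have hterm : ‖⟪φ k, φ k⟫‖ ^ 2 ≤ ∑' j : ℕ, ‖⟪φ k, φ j⟫‖ ^ 2 :=
      Summable.le_tsum hs k (fun j _ => sq_nonneg _)
    have hself : ‖⟪φ k, φ k⟫‖ = ‖φ k‖ ^ 2 := by
      rw [@inner_self_eq_norm_sq_to_K ℂ]
      simp [norm_pow]
    have h4 : (‖φ k‖ ^ 2) ^ 2 ≤ B₁ * ‖φ k‖ ^ 2 := by
      calc (‖φ k‖ ^ 2) ^ 2 = ‖⟪φ k, φ k⟫‖ ^ 2 := by rw [hself]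
        _ ≤ ∑' j : ℕ, ‖⟪φ k, φ j⟫‖ ^ 2 := hterm
        _ ≤ B₁ * ‖φ k‖ ^ 2 := hub
    have hp : (0:ℝ) < ‖φ k‖ ^ 2 := pow_pos (hφpos k) 2
    nlinarith
  -- orthonormal normalization
  set u : ℕ → H := fun j => (‖φ j‖:ℂ)⁻¹ • φ j with hu
  have hu_orth : Orthonormal ℂ u := by
    constructor
    · intro j
      rw [hu]
      simp only [norm_smul, norm_inv, Complex.norm_real, norm_norm]
      field_simp [ne_of_gt (hφpos j)]
    · intro j k hjk
      rw [hu]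
      simp only [inner_smul_left, inner_smul_right, horth j k hjk, mul_zero]
  set V : ∀ _ : ℕ, ℂ →ₗᵢ[ℂ] H := fun j =>
    LinearIsometry.toSpanSingleton ℂ H (hu_orth.1 j) with hV
  have hVorth : OrthogonalFamily ℂ (fun _ : ℕ => ℂ) V := hu_orth.orthogonalFamily
  set g : ℕ → ℂ := fun j => c j * (‖φ j‖ : ℂ) with hg
  have hVg : ∀ j, V j (g j) = c j • φ j := by
    intro j
    have hne : (‖φ j‖:ℂ) ≠ 0 := by exact_mod_cast (hφpos j).ne'
    show (c j * (‖φ j‖:ℂ)) • ((‖φ j‖:ℂ)⁻¹ • φ j) = c j • φ j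
    rw [smul_smul, mul_assoc, mul_inv_cancel₀ hne, mul_one]
  have hgnorm : ∀ j, ‖g j‖ ^ 2 = ‖c j‖ ^ 2 * ‖φ j‖ ^ 2 := by
    intro j
    rw [hg]
    simp [norm_mul, mul_pow]
  obtain ⟨hcsq, hlb, hub⟩ := hfr f
  have hgsq : Summable fun j => ‖g j‖ ^ 2 := by
    apply Summable.of_nonneg_of_le (fun j => by positivity)
      (fun j => ?_) (hcsq.mul_left B₁)
    rw [hgnorm j]
    calc ‖c j‖ ^ 2 * ‖φ j‖ ^ 2 ≤ ‖c j‖ ^ 2 * B₁ :=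
          mul_le_mul_of_nonneg_left (hBnorm j) (by positivity)
      _ = B₁ * ‖c j‖ ^ 2 := by ring
  have hkey : ‖∑' j : ℕ, c j • φ j‖ ^ 2 = ∑' j : ℕ, ‖g j‖ ^ 2 := by
    have h := aux_norm_sq_tsum hVorth g hgsq
    rwa [tsum_congr hVg] at h
  -- lower bound on ∑ ‖g j‖²
  have hge : α * (∑' j : ℕ, ‖c j‖ ^ 2) ≤ ∑' j : ℕ, ‖g j‖ ^ 2 := by
    rw [← tsum_mul_left]
    apply Summable.tsum_le_tsum _ (hcsq.mul_left α) hgsq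
    intro j
    rw [hgnorm j]
    calc α * ‖c j‖ ^ 2 = ‖c j‖ ^ 2 * α := by ring
      _ ≤ ‖c j‖ ^ 2 * ‖φ j‖ ^ 2 :=
        mul_le_mul_of_nonneg_left (hnorm j).le (sq_nonneg _)
  have hfinal : α * A₁ * ‖ContinuousLinearMap.adjoint K f‖ ^ 2 ≤
      ‖∑' j : ℕ, c j • φ j‖ ^ 2 := by
    rw [hkey]
    calc α * A₁ * ‖ContinuousLinearMap.adjoint K f‖ ^ 2
        = α * (A₁ * ‖ContinuousLinearMap.adjoint K f‖ ^ 2) := by ring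
      _ ≤ α * (∑' j : ℕ, ‖c j‖ ^ 2) := by
          exact mul_le_mul_of_nonneg_left hlb (le_of_lt hα)
      _ ≤ ∑' j : ℕ, ‖g j‖ ^ 2 := hge
  have hsqrt : Real.sqrt (α * A₁ * ‖ContinuousLinearMap.adjoint K f‖ ^ 2) =
      Real.sqrt (α * A₁) * ‖ContinuousLinearMap.adjoint K f‖ := by
    rw [Real.sqrt_mul (by positivity : (0:ℝ) ≤ α * A₁), Real.sqrt_sq (norm_nonneg _)]
  calc Real.sqrt (α * A₁) * ‖ContinuousLinearMap.adjoint K f‖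
      = Real.sqrt (α * A₁ * ‖ContinuousLinearMap.adjoint K f‖ ^ 2) := hsqrt.symm
    _ ≤ Real.sqrt (‖∑' j : ℕ, c j • φ j‖ ^ 2) := Real.sqrt_le_sqrt hfinal
    _ = ‖∑' j : ℕ, c j • φ j‖ := Real.sqrt_sq (norm_nonneg _)
end
end

section
/- Let H = ℓ²(ℕ) with canonical orthonormal basis {e_j}_{j∈ℕ}, let K be the orthogonal projection of H onto the closed span of {e_j : j ≥ 2}, and let U be the orthogonal projection of H onto the closed span of {e_j : j ≥ 3}. Define Φ = {φ_j}_{j∈ℕ} by φ_{2k−1} = e_k and φ_{2k} = 0 for all k ≥ 1, and Ψ = {ψ_j}_{j∈ℕ} by ψ₁ = 0, ψ₂ = e₁, ψ₃ = 0, ψ₄ = e₂, and ψ_{2k+1} = ψ_{2k+2} = e_{k+1} for all k ≥ 2. Then the images UΦ = {U(φ_j)}_{j∈ℕ} and UΨ = {U(ψ_j)}_{j∈ℕ} are UK-woven with universal bounds 1 and 2: for every subset σ ⊆ ℕ and every f ∈ H, ‖(UK)* f‖² ≤ ∑_{j∈σ} |⟨f, U(φ_j)⟩|² + ∑_{j∈σᶜ}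 |⟨f, U(ψ_j)⟩|² ≤ 2‖f‖². -/
/- STATEMENT 15: in H = ℓ²(ℕ) (0-based canonical basis E 0, E 1, …; the paper's e_j is
E (j-1)), with K the orthogonal projection onto the closed span of {E k : k ≥ 1} and U the
orthogonal projection onto the closed span of {E k : k ≥ 2}, the images UΦ and UΨ of
Φ = {e₁, 0, e₂, 0, e₃, 0, …} and Ψ = {0, e₁, 0, e₂, e₃, e₃, e₄, e₄, …} are UK-woven with
universal bounds 1 and 2. -/

local notation "⟪" x ", " y "⟫" => @inner ℂ _ _ x y

noncomputable section

abbrev H2 : Type := lp (fun _ : ℕ => ℂ) 2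

/-- The canonical orthonormal basis of ℓ²(ℕ) (0-based; the paper's `e_j` is `E (j-1)`). -/
def E (n : ℕ) : H2 := lp.single 2 n 1

/-- The closed span of {E k : k ≥ 1}, i.e. of the paper's {e_j : j ≥ 2}. -/
def S : Submodule ℂ H2 :=
  (Submodule.span ℂ (Set.range fun k : ℕ => E (k + 1))).topologicalClosure

/-- The closed span of {E k : k ≥ 2}, i.e. of the paper's {e_j : j ≥ 3}. -/
def T : Submodule ℂ H2 :=
  (Submodule.span ℂ (Set.range fun k : ℕ => E (k + 2))).topologicalClosure

/-- Φ = {e₁, 0, e₂, 0, e₃, 0, …} (0-based indexing): φ_{2k−1} = e_k, φ_{2k} = 0. -/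
def Φ (n : ℕ) : H2 := if Even n then E (n / 2) else 0

/-- Ψ = {0, e₁, 0, e₂, e₃, e₃, e₄, e₄, …} (0-based indexing). -/
def Ψ (n : ℕ) : H2 := if n = 0 ∨ n = 2 then 0 else E (n / 2)


lemma E_apply (n m : ℕ) : (E n : ∀ _ : ℕ, ℂ) m = if m = n then 1 else 0 := by
  rw [E, lp.single_apply]
  split_ifs with h
  · subst h; simp
  · simp [h]

lemma inner_E_left (n : ℕ) (g : H2) : ⟪E n, g⟫ = g n := by
  rw [E, lp.inner_single_left]
  simp [RCLike.inner_apply]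

lemma norm_inner_E_right (g : H2) (n : ℕ) : ‖⟪g, E n⟫‖ = ‖g n‖ := by
  rw [E, lp.inner_single_right]
  simp [RCLike.inner_apply]

lemma E_mem_T (k : ℕ) : E (k + 2) ∈ T :=
  Submodule.le_topologicalClosure _ (Submodule.subset_span ⟨k, rfl⟩)

lemma T_le_S : T ≤ S := by
  apply Submodule.topologicalClosure_mono
  apply Submodule.span_mono
  rintro x ⟨k, rfl⟩
  exact ⟨k + 1, rfl⟩

lemma E_mem_Torth (n : ℕ) (hn : n < 2) : E n ∈ Tᗮ := by
  have hker : T ≤ LinearMap.ker ((innerSL ℂ (E n) : H2 →L[ℂ] ℂ) : H2 →ₗ[ℂ] ℂ) := by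
    apply Submodule.topologicalClosure_minimal
    · rw [Submodule.span_le]
      rintro x ⟨k, rfl⟩
      simp only [SetLike.mem_coe, LinearMap.mem_ker, ContinuousLinearMap.coe_coe, innerSL_apply_apply]
      rw [inner_E_left, E_apply]
      simp only [if_neg (by omega : ¬ (n = k + 2))]
    · exact ContinuousLinearMap.isClosed_ker (innerSL ℂ (E n))
  rw [Submodule.mem_orthogonal']
  intro u hu
  have := hker hu
  simpa using this

lemma norm_sq_eq (g : H2) : ‖g‖ ^ 2 = ∑' n, ‖g n‖ ^ 2 := by
  have h := lp.norm_rpow_eq_tsum (p := 2) (by norm_num) g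
  rw [show (2 : ENNReal).toReal = ((2 : ℕ) : ℝ) by norm_num] at h
  simpa [Real.rpow_natCast] using h

lemma summable_norm_sq (g : H2) : Summable fun n => ‖g n‖ ^ 2 := by
  have h := (lp.memℓp g).summable (by norm_num : 0 < (2 : ENNReal).toReal)
  rw [show (2 : ENNReal).toReal = ((2 : ℕ) : ℝ) by norm_num] at h
  simpa [Real.rpow_natCast] using h

/-- the coefficient function `k ↦ ‖f k‖²` truncated to `k ≥ 2`. -/
def hfun (f : H2) (k : ℕ) : ℝ := if 2 ≤ k then ‖f k‖ ^ 2 else 0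

lemma hfun_nonneg (f : H2) (k : ℕ) : 0 ≤ hfun f k := by
  rw [hfun]; split_ifs <;> positivity

lemma hfun_le (f : H2) (k : ℕ) : hfun f k ≤ ‖f k‖ ^ 2 := by
  rw [hfun]; split_ifs with h
  · exact le_rfl
  · positivity

lemma summable_hfun (f : H2) : Summable (hfun f) :=
  Summable.of_nonneg_of_le (hfun_nonneg f) (hfun_le f) (summable_norm_sq f)

lemma tsum_hfun_le (f : H2) : ∑' k, hfun f k ≤ ‖f‖ ^ 2 := by
  rw [norm_sq_eq]
  exact Summable.tsum_le_tsum (hfun_le f) (summable_hfun f) (summable_norm_sq f)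

lemma even_div (f : H2) : (fun k : ℕ => hfun f ((2 * k) / 2)) = hfun f := by
  funext k; congr 1; omega

lemma odd_div (f : H2) : (fun k : ℕ => hfun f ((2 * k + 1) / 2)) = hfun f := by
  funext k; congr 1; omega

lemma summable_G (f : H2) : Summable (fun j : ℕ => hfun f (j / 2)) := by
  apply Summable.even_add_odd
  · rw [even_div]; exact summable_hfun f
  · rw [odd_div]; exact summable_hfun f

lemma tsum_G (f : H2) : ∑' j : ℕ, hfun f (j / 2) = 2 * ∑' k, hfun f k := by
  rw [← tsum_even_add_odd (by rw [even_div]; exact summable_hfun f)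
    (by rw [odd_div]; exact summable_hfun f)]
  rw [even_div, odd_div]; ring

lemma F_le_G (f : H2) (j : ℕ) :
    (if Even j then hfun f (j / 2) else 0) ≤ hfun f (j / 2) := by
  split_ifs
  · exact le_rfl
  · exact hfun_nonneg f _

lemma F_nonneg (f : H2) (j : ℕ) : 0 ≤ (if Even j then hfun f (j / 2) else 0) := by
  split_ifs
  · exact hfun_nonneg f _
  · exact le_rfl

lemma summable_F (f : H2) : Summable (fun j : ℕ => if Even j then hfun f (j / 2) else 0) :=
  Summable.of_nonneg_of_le (F_nonneg f) (F_le_G f) (summable_G f)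

lemma F_even (f : H2) :
    (fun k : ℕ => if Even (2 * k) then hfun f ((2 * k) / 2) else 0) = hfun f := by
  funext k
  rw [if_pos (even_two_mul k)]
  congr 1; omega

lemma F_odd (f : H2) :
    (fun k : ℕ => if Even (2 * k + 1) then hfun f ((2 * k + 1) / 2) else 0) =
      (fun _ => (0 : ℝ)) := by
  funext k
  rw [if_neg (by simp [Nat.even_add_one, parity_simps])]

lemma tsum_F (f : H2) : ∑' j : ℕ, (if Even j then hfun f (j / 2) else 0) = ∑' k, hfun f k := by
  rw [← tsum_even_add_odd (by rw [F_even]; exact summable_hfun f)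
    (by rw [F_odd]; exact summable_zero)]
  rw [F_even, F_odd]
  simp

theorem stmt15 (K U : H2 →L[ℂ] H2)
    -- K is the orthogonal projection of H2 onto S
    (hK₁ : ∀ f : H2, K f ∈ S) (hK₂ : ∀ f : H2, f - K f ∈ Sᗮ)
    -- U is the orthogonal projection of H2 onto T
    (hU₁ : ∀ f : H2, U f ∈ T) (hU₂ : ∀ f : H2, f - U f ∈ Tᗮ) :
    ∀ σ : Set ℕ, ∀ f : H2,
      ‖ContinuousLinearMap.adjoint (U.comp K) f‖ ^ 2 ≤
        ∑' j : σ, ‖⟪f, U (Φ (j : ℕ))⟫‖ ^ 2 + ∑' j : ↥σᶜ, ‖⟪f, U (Ψ (j : ℕ))⟫‖ ^ 2 ∧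
      ∑' j : σ, ‖⟪f, U (Φ (j : ℕ))⟫‖ ^ 2 + ∑' j : ↥σᶜ, ‖⟪f, U (Ψ (j : ℕ))⟫‖ ^ 2 ≤
        2 * ‖f‖ ^ 2 := by
  -- generic facts about the orthogonal projection U
  have hUid : ∀ g ∈ T, U g = g := by
    intro g hg
    have h1 : g - U g ∈ T := T.sub_mem hg (hU₁ g)
    have h0 : g - U g = 0 := Submodule.disjoint_def.mp T.orthogonal_disjoint _ h1 (hU₂ g)
    exact (sub_eq_zero.mp h0).symm
  have hKid : ∀ g ∈ S, K g = g := by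
    intro g hg
    have h1 : g - K g ∈ S := S.sub_mem hg (hK₁ g)
    have h0 : g - K g = 0 := Submodule.disjoint_def.mp S.orthogonal_disjoint _ h1 (hK₂ g)
    exact (sub_eq_zero.mp h0).symm
  have hUzero : ∀ g ∈ Tᗮ, U g = 0 := by
    intro g hg
    have h1 : U g ∈ Tᗮ := by
      have he : U g = g - (g - U g) := by abel
      rw [he]
      exact Submodule.sub_mem _ hg (hU₂ g)
    exact Submodule.disjoint_def.mp T.orthogonal_disjoint _ (hU₁ g) h1
  have hsaU : ∀ x y : H2, ⟪U x, y⟫ = ⟪x, U y⟫ := by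
    intro x y
    have h1 : ⟪U x, y - U y⟫ = 0 :=
      (Submodule.mem_orthogonal T (y - U y)).mp (hU₂ y) _ (hU₁ x)
    have h2 : ⟪x - U x, U y⟫ = 0 :=
      (Submodule.mem_orthogonal' T (x - U x)).mp (hU₂ x) _ (hU₁ y)
    rw [inner_sub_right] at h1
    rw [inner_sub_left] at h2
    have e1 : ⟪U x, y⟫ = ⟪U x, U y⟫ := by linear_combination h1
    have e2 : ⟪x, U y⟫ = ⟪U x, U y⟫ := by linear_combination h2
    rw [e1, e2]
  -- U ∘ K = U and its adjoint is U
  have hcomp : U.comp K = U := by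
    refine ContinuousLinearMap.ext fun g => ?_
    simp only [ContinuousLinearMap.comp_apply]
    have h1 : g - K g ∈ Tᗮ := Submodule.orthogonal_le T_le_S (hK₂ g)
    have h2 : U (g - K g) = 0 := hUzero _ h1
    have h3 : U (K g + (g - K g)) = U g := by rw [add_sub_cancel]
    rw [map_add, h2, add_zero] at h3
    exact h3
  have hadj : ContinuousLinearMap.adjoint (U.comp K) = U := by
    rw [hcomp]
    exact ((ContinuousLinearMap.eq_adjoint_iff U U).mpr hsaU).symm
  intro σ f
  -- the basis images under U
  have hUE : ∀ k : ℕ, U (E (k + 2)) = E (k + 2) := fun k => hUid _ (E_mem_T k)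
  have hUE0 : ∀ n : ℕ, n < 2 → U (E n) = 0 := fun n hn => hUzero _ (E_mem_Torth n hn)
  -- coordinates of U f
  have hUf_coord : ∀ n : ℕ, 2 ≤ n → (U f) n = f n := by
    intro n hn
    obtain ⟨k, rfl⟩ : ∃ k, n = k + 2 := ⟨n - 2, by omega⟩
    calc (U f) (k + 2) = ⟪E (k + 2), U f⟫ := (inner_E_left _ (U f)).symm
      _ = ⟪U (E (k + 2)), f⟫ := by rw [hsaU]
      _ = ⟪E (k + 2), f⟫ := by rw [hUE]
      _ = f (k + 2) := inner_E_left _ f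
  have hUf_zero : ∀ n : ℕ, n < 2 → (U f) n = 0 := by
    intro n hn
    rw [← inner_E_left]
    exact (Submodule.mem_orthogonal' T _).mp (E_mem_Torth n hn) _ (hU₁ f)
  -- termwise identification of the frame coefficients
  have hΦterm : ∀ j : ℕ, ‖⟪f, U (Φ j)⟫‖ ^ 2 = (if Even j then hfun f (j / 2) else 0) := by
    intro j
    by_cases hj : Even j
    · rw [Φ, if_pos hj, if_pos hj]
      by_cases h2 : 2 ≤ j / 2
      · obtain ⟨k, hk⟩ : ∃ k, j / 2 = k + 2 := ⟨j / 2 - 2, by omega⟩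
        rw [hk, hUE k, norm_inner_E_right, hfun, if_pos (by omega)]
      · rw [hUE0 _ (by omega), hfun, if_neg h2]
        simp
    · rw [Φ, if_neg hj, if_neg hj]
      simp
  have hΨterm : ∀ j : ℕ, ‖⟪f, U (Ψ j)⟫‖ ^ 2 = hfun f (j / 2) := by
    intro j
    by_cases hj0 : j = 0 ∨ j = 2
    · rw [Ψ, if_pos hj0]
      rcases hj0 with rfl | rfl <;> simp [hfun]
    · rw [Ψ, if_neg hj0]
      by_cases h2 : 2 ≤ j / 2
      · obtain ⟨k, hk⟩ : ∃ k, j / 2 = k + 2 := ⟨j / 2 - 2, by omega⟩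
        rw [hk, hUE k, norm_inner_E_right, hfun, if_pos (by omega)]
      · rw [hUE0 _ (by omega), hfun, if_neg h2]
        simp
  -- rewrite the two subfamily sums
  have e1 : ∑' j : σ, ‖⟪f, U (Φ (j : ℕ))⟫‖ ^ 2 =
      ∑' j : σ, (if Even (j : ℕ) then hfun f ((j : ℕ) / 2) else 0) :=
    tsum_congr fun j => hΦterm j
  have e2 : ∑' j : ↥σᶜ, ‖⟪f, U (Ψ (j : ℕ))⟫‖ ^ 2 = ∑' j : ↥σᶜ, hfun f ((j : ℕ) / 2) :=
    tsum_congr fun j => hΨterm j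
  -- the norm of the adjoint applied to f
  have hUKf : ‖ContinuousLinearMap.adjoint (U.comp K) f‖ ^ 2 = ∑' k, hfun f k := by
    rw [hadj, norm_sq_eq (U f)]
    apply tsum_congr
    intro n
    by_cases hn : 2 ≤ n
    · rw [hUf_coord n hn, hfun, if_pos hn]
    · rw [hUf_zero n (by omega), hfun, if_neg hn]
      simp
  -- abbreviations
  set F : ℕ → ℝ := fun j => if Even j then hfun f (j / 2) else 0 with hFdef
  set G : ℕ → ℝ := fun j => hfun f (j / 2) with hGdef
  have hFsum : Summable F := summable_F f
  have hGsum : Summable G := summable_G f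
  have hsplitF : ∑' j : σ, F j + ∑' j : ↥σᶜ, F j = ∑' j, F j :=
    Summable.tsum_add_tsum_compl (hFsum.subtype _) (hFsum.subtype _)
  have hsplitG : ∑' j : σ, G j + ∑' j : ↥σᶜ, G j = ∑' j, G j :=
    Summable.tsum_add_tsum_compl (hGsum.subtype _) (hGsum.subtype _)
  have hFGσ : ∀ s : Set ℕ, ∑' j : s, F j ≤ ∑' j : s, G j := fun s =>
    Summable.tsum_le_tsum (fun j => F_le_G f j) (hFsum.subtype _) (hGsum.subtype _)
  rw [e1, e2, hUKf]
  constructor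
  · calc ∑' k, hfun f k = ∑' j, F j := (tsum_F f).symm
      _ = ∑' j : σ, F j + ∑' j : ↥σᶜ, F j := hsplitF.symm
      _ ≤ ∑' j : σ, F j + ∑' j : ↥σᶜ, G j := by
          exact add_le_add_right (hFGσ σᶜ) _
  · calc ∑' j : σ, F j + ∑' j : ↥σᶜ, G j
        ≤ ∑' j : σ, G j + ∑' j : ↥σᶜ, G j := add_le_add_left (hFGσ σ) _
      _ = ∑' j, G j := hsplitG
      _ = 2 * ∑' k, hfun f k := tsum_G f
      _ ≤ 2 * ‖f‖ ^ 2 := by nlinarith [tsum_hfun_le f]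
end
end

section
/- Let K : H → H be a bounded linear operator with closed range, and let K̃* denote the restriction of K* to N(K*)^⊥, an invertible map onto R(K*) with bounded inverse. Suppose Φ₁ = {φ_{1j}}_{j∈ℕ} and Φ₂ = {φ_{2j}}_{j∈ℕ} are K-frames for H with bounds A₁, B₁ and A₂, B₂ respectively, the vectors of Φ₁ are pairwise orthogonal with ‖φ_{1j}‖² > α > 0 for all j, and there exist λ, μ, ν ≥ 0 with ‖∑_{j∈ℕ} a_j(φ_{1j} − φ_{2j})‖ ≤ λ‖{a_j}‖_{ℓ²} + μ‖∑_{j∈ℕ} a_j φ_{1j}‖ + ν‖∑_{j∈ℕ} a_j φ_{2j}‖ for all {a_j}_{j∈ℕ} ∈ ℓ²(ℕ). Then for every subset σ ⊆ ℕ and every f ∈ N(K*)^⊥, ‖∑_{j∈σ} ⟨f, φ_{1j}⟩ φ_{1j} + ∑_{j∈σᶜ} ⟨f, φ_{2j}⟩ φ_{2j}‖ ≥ [√(αA₁) − (√B₁ + √B₂)(λ + μ√B₁ + ν√B₂)‖(K̃*)⁻¹‖] ‖K* f‖. -/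
/- STATEMENT 16 (key estimate (2.11) in the perturbation theorem). The norm ‖(K̃*)⁻¹‖ of
the (bounded) inverse of the restriction of K* to N(K*)^⊥ is modelled by a constant c ≥ 0
satisfying ‖f‖ ≤ c‖K* f‖ for all f ∈ N(K*)^⊥. -/

local notation "⟪" x ", " y "⟫" => @inner ℂ _ _ x y

noncomputable section

variable {H : Type} [NormedAddCommGroup H] [InnerProductSpace ℂ H] [CompleteSpace H]

private lemma cs_finset (a b : ℕ → ℝ) (ha : ∀ j, 0 ≤ a j) (hb : ∀ j, 0 ≤ b j) (F : Finset ℕ) :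
    ∑ j ∈ F, a j * b j ≤ Real.sqrt (∑ j ∈ F, a j ^ 2) * Real.sqrt (∑ j ∈ F, b j ^ 2) := by
  have h := Finset.sum_mul_sq_le_sq_mul_sq F a b
  have h1 : 0 ≤ ∑ j ∈ F, a j * b j :=
    Finset.sum_nonneg fun j _ => mul_nonneg (ha j) (hb j)
  have h2 : 0 ≤ ∑ j ∈ F, a j ^ 2 := Finset.sum_nonneg fun j _ => sq_nonneg _
  calc ∑ j ∈ F, a j * b j = Real.sqrt ((∑ j ∈ F, a j * b j) ^ 2) := (Real.sqrt_sq h1).symm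
    _ ≤ Real.sqrt ((∑ j ∈ F, a j ^ 2) * ∑ j ∈ F, b j ^ 2) := Real.sqrt_le_sqrt h
    _ = _ := Real.sqrt_mul h2 _

private lemma synth_finset (φ : ℕ → H) (B : ℝ) (hB0 : 0 ≤ B)
    (hsum : ∀ f : H, Summable fun j : ℕ => ‖⟪f, φ j⟫‖ ^ 2)
    (hupper : ∀ f : H, ∑' j : ℕ, ‖⟪f, φ j⟫‖ ^ 2 ≤ B * ‖f‖ ^ 2)
    (a : ℕ → ℂ) (F : Finset ℕ) :
    ‖∑ j ∈ F, a j • φ j‖ ≤ Real.sqrt B * Real.sqrt (∑ j ∈ F, ‖a j‖ ^ 2) := by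
  set g : H := ∑ j ∈ F, a j • φ j with hg
  rcases eq_or_lt_of_le (norm_nonneg g) with h0 | h0
  · rw [← h0]
    exact mul_nonneg (Real.sqrt_nonneg _) (Real.sqrt_nonneg _)
  have key : ⟪g, g⟫ = ∑ j ∈ F, a j * ⟪g, φ j⟫ := by
    conv_lhs => rw [hg, inner_sum]
    exact Finset.sum_congr rfl fun j _ => inner_smul_right _ _ _
  have h1 : ‖g‖ ^ 2 ≤ ∑ j ∈ F, ‖a j‖ * ‖⟪g, φ j⟫‖ := by
    have e1 : ‖g‖ ^ 2 = ‖⟪g, g⟫‖ := by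
      rw [← inner_self_eq_norm_sq (𝕜 := ℂ), inner_self_re_eq_norm]
    rw [e1, key]
    refine (norm_sum_le _ _).trans_eq ?_
    exact Finset.sum_congr rfl fun j _ => norm_mul _ _
  have h2 : ∑ j ∈ F, ‖⟪g, φ j⟫‖ ^ 2 ≤ B * ‖g‖ ^ 2 :=
    (Summable.sum_le_tsum F (fun j _ => sq_nonneg _) (hsum g)).trans (hupper g)
  have h3 : ∑ j ∈ F, ‖a j‖ * ‖⟪g, φ j⟫‖ ≤
      Real.sqrt (∑ j ∈ F, ‖a j‖ ^ 2) * Real.sqrt (∑ j ∈ F, ‖⟪g, φ j⟫‖ ^ 2) :=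
    cs_finset _ _ (fun j => norm_nonneg _) (fun j => norm_nonneg _) F
  have h4 : Real.sqrt (∑ j ∈ F, ‖⟪g, φ j⟫‖ ^ 2) ≤ Real.sqrt B * ‖g‖ := by
    calc Real.sqrt (∑ j ∈ F, ‖⟪g, φ j⟫‖ ^ 2) ≤ Real.sqrt (B * ‖g‖ ^ 2) := Real.sqrt_le_sqrt h2
      _ = Real.sqrt B * ‖g‖ := by rw [Real.sqrt_mul hB0, Real.sqrt_sq (norm_nonneg _)]
  have h5 : ‖g‖ ^ 2 ≤ Real.sqrt (∑ j ∈ F, ‖a j‖ ^ 2) * (Real.sqrt B * ‖g‖) := by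
    refine h1.trans (h3.trans ?_)
    exact mul_le_mul_of_nonneg_left h4 (Real.sqrt_nonneg _)
  nlinarith [h5, h0, Real.sqrt_nonneg (∑ j ∈ F, ‖a j‖ ^ 2), Real.sqrt_nonneg B]

private lemma synth_summable (φ : ℕ → H) (B : ℝ) (hB0 : 0 ≤ B)
    (hsum : ∀ f : H, Summable fun j : ℕ => ‖⟪f, φ j⟫‖ ^ 2)
    (hupper : ∀ f : H, ∑' j : ℕ, ‖⟪f, φ j⟫‖ ^ 2 ≤ B * ‖f‖ ^ 2)
    (a : ℕ → ℂ) (ha : Summable fun j => ‖a j‖ ^ 2) :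
    Summable fun j => a j • φ j := by
  rw [summable_iff_vanishing_norm]
  intro ε hε
  have hδ : 0 < (ε / (Real.sqrt B + 1)) ^ 2 := by
    have : 0 < Real.sqrt B + 1 := by positivity
    positivity
  obtain ⟨s, hs⟩ := summable_iff_vanishing_norm.1 ha _ hδ
  refine ⟨s, fun t ht => ?_⟩
  have h1 : ∑ j ∈ t, ‖a j‖ ^ 2 < (ε / (Real.sqrt B + 1)) ^ 2 := by
    have := hs t ht
    calc ∑ j ∈ t, ‖a j‖ ^ 2 ≤ ‖∑ j ∈ t, ‖a j‖ ^ 2‖ := le_abs_self _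
      _ < _ := this
  have h2 : Real.sqrt (∑ j ∈ t, ‖a j‖ ^ 2) ≤ ε / (Real.sqrt B + 1) := by
    rw [show ε / (Real.sqrt B + 1) = Real.sqrt ((ε / (Real.sqrt B + 1)) ^ 2) from
      (Real.sqrt_sq (by positivity)).symm]
    exact Real.sqrt_le_sqrt h1.le
  refine lt_of_le_of_lt (synth_finset φ B hB0 hsum hupper a t) ?_
  have hB1 : 0 < Real.sqrt B + 1 := by positivity
  calc Real.sqrt B * Real.sqrt (∑ j ∈ t, ‖a j‖ ^ 2)
      ≤ Real.sqrt B * (ε / (Real.sqrt B + 1)) :=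
        mul_le_mul_of_nonneg_left h2 (Real.sqrt_nonneg _)
    _ < (Real.sqrt B + 1) * (ε / (Real.sqrt B + 1)) := by
        have : 0 < ε / (Real.sqrt B + 1) := by positivity
        nlinarith
    _ = ε := by field_simp

private lemma synth_tsum_le (φ : ℕ → H) (B : ℝ) (hB0 : 0 ≤ B)
    (hsum : ∀ f : H, Summable fun j : ℕ => ‖⟪f, φ j⟫‖ ^ 2)
    (hupper : ∀ f : H, ∑' j : ℕ, ‖⟪f, φ j⟫‖ ^ 2 ≤ B * ‖f‖ ^ 2)
    (a : ℕ → ℂ) (ha : Summable fun j => ‖a j‖ ^ 2) :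
    ‖∑' j : ℕ, a j • φ j‖ ≤ Real.sqrt B * Real.sqrt (∑' j : ℕ, ‖a j‖ ^ 2) := by
  have hS := (synth_summable φ B hB0 hsum hupper a ha).hasSum
  refine le_of_tendsto hS.norm (Filter.Eventually.of_forall fun F => ?_)
  refine (synth_finset φ B hB0 hsum hupper a F).trans ?_
  refine mul_le_mul_of_nonneg_left (Real.sqrt_le_sqrt ?_) (Real.sqrt_nonneg _)
  exact Summable.sum_le_tsum F (fun j _ => sq_nonneg _) ha

private lemma memℓp_two_of (a : ℕ → ℂ) (ha : Summable fun j => ‖a j‖ ^ 2) :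
    Memℓp a 2 := by
  apply memℓp_gen
  have : (2 : ENNReal).toReal = ((2 : ℕ) : ℝ) := by simp
  rw [this]
  simpa only [Real.rpow_natCast] using ha

private lemma lp_norm_eq (a : ℕ → ℂ) (ha : Summable fun j => ‖a j‖ ^ 2) :
    ‖(⟨a, memℓp_two_of a ha⟩ : lp (fun _ : ℕ => ℂ) 2)‖ =
      Real.sqrt (∑' j : ℕ, ‖a j‖ ^ 2) := by
  rw [lp.norm_eq_tsum_rpow (by norm_num) _]
  have h2 : (2 : ENNReal).toReal = ((2 : ℕ) : ℝ) := by simp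
  rw [h2]
  simp only [Real.rpow_natCast]
  rw [Real.sqrt_eq_rpow]
  norm_num

set_option maxHeartbeats 1000000 in
theorem stmt16 [TopologicalSpace.SeparableSpace H]
    (K : H →L[ℂ] H) (hK : IsClosed (Set.range K))
    (φ₁ φ₂ : ℕ → H) (A₁ B₁ A₂ B₂ : ℝ)
    (hφ₁ : IsKFrameWith K φ₁ A₁ B₁) (hφ₂ : IsKFrameWith K φ₂ A₂ B₂)
    (horth : ∀ j k : ℕ, j ≠ k → ⟪φ₁ j, φ₁ k⟫ = 0)
    (α : ℝ) (hα : 0 < α) (hnorm : ∀ j : ℕ, α < ‖φ₁ j‖ ^ 2)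
    -- c models ‖(K̃*)⁻¹‖, the norm of the inverse of the restriction of K* to N(K*)^⊥
    (c : ℝ) (hc0 : 0 ≤ c)
    (hc : ∀ f ∈ (LinearMap.ker (ContinuousLinearMap.adjoint K : H →ₗ[ℂ] H))ᗮ,
      ‖f‖ ≤ c * ‖ContinuousLinearMap.adjoint K f‖)
    (lam mu nu : ℝ) (hlam : 0 ≤ lam) (hmu : 0 ≤ mu) (hnu : 0 ≤ nu)
    (hperturb : ∀ a : lp (fun _ : ℕ => ℂ) 2,
      ‖∑' j : ℕ, a j • (φ₁ j - φ₂ j)‖ ≤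
        lam * ‖a‖ + mu * ‖∑' j : ℕ, a j • φ₁ j‖ + nu * ‖∑' j : ℕ, a j • φ₂ j‖) :
    ∀ σ : Set ℕ, ∀ f ∈ (LinearMap.ker (ContinuousLinearMap.adjoint K : H →ₗ[ℂ] H))ᗮ,
      (Real.sqrt (α * A₁) - (Real.sqrt B₁ + Real.sqrt B₂) *
          (lam + mu * Real.sqrt B₁ + nu * Real.sqrt B₂) * c) *
          ‖ContinuousLinearMap.adjoint K f‖ ≤
        ‖(∑' j : σ, ⟪f, φ₁ (j : ℕ)⟫ • φ₁ (j : ℕ)) +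
          ∑' j : ↥σᶜ, ⟪f, φ₂ (j : ℕ)⟫ • φ₂ (j : ℕ)‖ := by
  intro σ f hf
  obtain ⟨hA₁, hB₁, h₁⟩ := hφ₁
  obtain ⟨hA₂, hB₂, h₂⟩ := hφ₂
  have hB₁0 : (0:ℝ) ≤ B₁ := hB₁.le
  have hB₂0 : (0:ℝ) ≤ B₂ := hB₂.le
  have hsum1 : ∀ g : H, Summable fun j : ℕ => ‖⟪g, φ₁ j⟫‖ ^ 2 := fun g => (h₁ g).1
  have hup1 : ∀ g : H, ∑' j : ℕ, ‖⟪g, φ₁ j⟫‖ ^ 2 ≤ B₁ * ‖g‖ ^ 2 := fun g => (h₁ g).2.2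
  have hsum2 : ∀ g : H, Summable fun j : ℕ => ‖⟪g, φ₂ j⟫‖ ^ 2 := fun g => (h₂ g).1
  have hup2 : ∀ g : H, ∑' j : ℕ, ‖⟪g, φ₂ j⟫‖ ^ 2 ≤ B₂ * ‖g‖ ^ 2 := fun g => (h₂ g).2.2
  set Kf : H := ContinuousLinearMap.adjoint K f with hKf
  -- abbreviations for coefficients
  set b₁ : ℕ → ℂ := fun j => ⟪f, φ₁ j⟫ with hb₁def
  set b₂ : ℕ → ℂ := fun j => ⟪f, φ₂ j⟫ with hb₂def
  set d : ℕ → ℂ := fun j => ⟪f, φ₁ j - φ₂ j⟫ with hddef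
  have hb₁sum : Summable fun j => ‖b₁ j‖ ^ 2 := hsum1 f
  set Cμ : ℝ := lam + mu * Real.sqrt B₁ + nu * Real.sqrt B₂ with hCdef
  have hC0 : 0 ≤ Cμ := by positivity
  -- applying the perturbation hypothesis to an ℓ² sequence
  have happ : ∀ (e : ℕ → ℂ), (Summable fun j => ‖e j‖ ^ 2) →
      ‖∑' j : ℕ, e j • (φ₁ j - φ₂ j)‖ ≤ Cμ * Real.sqrt (∑' j : ℕ, ‖e j‖ ^ 2) := by
    intro e he
    have h0 := hperturb ⟨e, memℓp_two_of e he⟩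
    have hcoe : ∀ j, ((⟨e, memℓp_two_of e he⟩ : lp (fun _ : ℕ => ℂ) 2) : ℕ → ℂ) j = e j :=
      fun j => rfl
    rw [lp_norm_eq e he] at h0
    simp only [hcoe] at h0
    have t1 : ‖∑' j : ℕ, e j • φ₁ j‖ ≤ Real.sqrt B₁ * Real.sqrt (∑' j : ℕ, ‖e j‖ ^ 2) :=
      synth_tsum_le φ₁ B₁ hB₁0 hsum1 hup1 e he
    have t2 : ‖∑' j : ℕ, e j • φ₂ j‖ ≤ Real.sqrt B₂ * Real.sqrt (∑' j : ℕ, ‖e j‖ ^ 2) :=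
      synth_tsum_le φ₂ B₂ hB₂0 hsum2 hup2 e he
    calc ‖∑' j : ℕ, e j • (φ₁ j - φ₂ j)‖
        ≤ lam * Real.sqrt (∑' j : ℕ, ‖e j‖ ^ 2) + mu * ‖∑' j : ℕ, e j • φ₁ j‖ +
            nu * ‖∑' j : ℕ, e j • φ₂ j‖ := h0
      _ ≤ lam * Real.sqrt (∑' j : ℕ, ‖e j‖ ^ 2) +
            mu * (Real.sqrt B₁ * Real.sqrt (∑' j : ℕ, ‖e j‖ ^ 2)) +
            nu * (Real.sqrt B₂ * Real.sqrt (∑' j : ℕ, ‖e j‖ ^ 2)) := by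
          gcongr
      _ = Cμ * Real.sqrt (∑' j : ℕ, ‖e j‖ ^ 2) := by rw [hCdef]; ring
  -- duality bound on the coefficients ⟪f, φ₁ j - φ₂ j⟫
  classical
  have hdual : ∀ F : Finset ℕ, ∑ j ∈ F, ‖d j‖ ^ 2 ≤ (Cμ * ‖f‖) ^ 2 := by
    intro F
    set e : ℕ → ℂ := fun j => if j ∈ F then (starRingEnd ℂ) (d j) else 0 with hedef
    have he0 : ∀ j ∉ F, e j = 0 := fun j hj => by simp [hedef, hj]
    have heF : ∀ j ∈ F, e j = (starRingEnd ℂ) (d j) := fun j hj => by simp [hedef, hj]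
    have he : Summable fun j => ‖e j‖ ^ 2 := by
      apply summable_of_ne_finset_zero (s := F)
      intro j hj
      rw [he0 j hj]
      simp
    have hes : ∑' j : ℕ, ‖e j‖ ^ 2 = ∑ j ∈ F, ‖d j‖ ^ 2 := by
      rw [tsum_eq_sum (s := F) (fun j hj => by rw [he0 j hj]; simp)]
      exact Finset.sum_congr rfl fun j hj => by rw [heF j hj]; simp
    have hs0 : (0:ℝ) ≤ ∑ j ∈ F, ‖d j‖ ^ 2 := Finset.sum_nonneg fun _ _ => sq_nonneg _
    have ht0 : ∑' j : ℕ, e j • (φ₁ j - φ₂ j) =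
        ∑ j ∈ F, (starRingEnd ℂ) (d j) • (φ₁ j - φ₂ j) := by
      rw [tsum_eq_sum (s := F) (fun j hj => by rw [he0 j hj, zero_smul])]
      exact Finset.sum_congr rfl fun j hj => by rw [heF j hj]
    have hkey : ((∑ j ∈ F, ‖d j‖ ^ 2 : ℝ) : ℂ) =
        ⟪f, ∑ j ∈ F, (starRingEnd ℂ) (d j) • (φ₁ j - φ₂ j)⟫ := by
      rw [inner_sum]
      rw [Complex.ofReal_sum]
      refine Finset.sum_congr rfl fun j hj => ?_
      rw [inner_smul_right]
      have : (⟪f, φ₁ j - φ₂ j⟫ : ℂ) = d j := by rw [hddef]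
      rw [this, Complex.conj_mul']
      norm_cast
    have hbound : ‖∑ j ∈ F, (starRingEnd ℂ) (d j) • (φ₁ j - φ₂ j)‖ ≤
        Cμ * Real.sqrt (∑ j ∈ F, ‖d j‖ ^ 2) := by
      rw [← ht0, ← hes]
      exact happ e he
    have hnormle : ∑ j ∈ F, ‖d j‖ ^ 2 ≤
        ‖f‖ * (Cμ * Real.sqrt (∑ j ∈ F, ‖d j‖ ^ 2)) :=
      calc ∑ j ∈ F, ‖d j‖ ^ 2 = ‖((∑ j ∈ F, ‖d j‖ ^ 2 : ℝ) : ℂ)‖ := by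
            rw [Complex.norm_real, Real.norm_eq_abs, abs_of_nonneg hs0]
        _ = ‖⟪f, ∑ j ∈ F, (starRingEnd ℂ) (d j) • (φ₁ j - φ₂ j)⟫‖ := by rw [hkey]
        _ ≤ ‖f‖ * ‖∑ j ∈ F, (starRingEnd ℂ) (d j) • (φ₁ j - φ₂ j)‖ := norm_inner_le_norm _ _
        _ ≤ ‖f‖ * (Cμ * Real.sqrt (∑ j ∈ F, ‖d j‖ ^ 2)) :=
            mul_le_mul_of_nonneg_left hbound (norm_nonneg f)
    have hsq := Real.sq_sqrt hs0
    nlinarith [hnormle, hsq, Real.sqrt_nonneg (∑ j ∈ F, ‖d j‖ ^ 2), hC0, norm_nonneg f,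
      mul_nonneg hC0 (norm_nonneg f), sq_nonneg (Real.sqrt (∑ j ∈ F, ‖d j‖ ^ 2) - Cμ * ‖f‖)]
  have hd_sum : Summable fun j => ‖d j‖ ^ 2 :=
    summable_of_sum_le (fun j => sq_nonneg _) hdual
  have hd_tsum : ∑' j : ℕ, ‖d j‖ ^ 2 ≤ (Cμ * ‖f‖) ^ 2 := Summable.tsum_le_of_sum_le hd_sum hdual
  -- indicator coefficients
  have hind_le : ∀ (u : ℕ → ℂ) (s : Set ℕ) (j : ℕ), ‖s.indicator u j‖ ^ 2 ≤ ‖u j‖ ^ 2 := by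
    intro u s j
    by_cases hj : j ∈ s
    · rw [Set.indicator_of_mem hj]
    · rw [Set.indicator_of_notMem hj]
      simp [sq_nonneg]
  have hind_sum : ∀ (u : ℕ → ℂ) (s : Set ℕ), (Summable fun j => ‖u j‖ ^ 2) →
      Summable fun j => ‖s.indicator u j‖ ^ 2 := fun u s hu =>
    Summable.of_nonneg_of_le (fun j => sq_nonneg _) (fun j => hind_le u s j) hu
  set a : ℕ → ℂ := (σᶜ).indicator b₁ with hadef
  set w : ℕ → ℂ := (σᶜ).indicator d with hwdef
  set i₁ : ℕ → ℂ := σ.indicator b₁ with hi₁def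
  set i₂ : ℕ → ℂ := (σᶜ).indicator b₂ with hi₂def
  have hb₂sum : Summable fun j => ‖b₂ j‖ ^ 2 := hsum2 f
  have ha_sum : Summable fun j => ‖a j‖ ^ 2 := hind_sum b₁ _ hb₁sum
  have hw_sum : Summable fun j => ‖w j‖ ^ 2 := hind_sum d _ hd_sum
  have hi₁_sum : Summable fun j => ‖i₁ j‖ ^ 2 := hind_sum b₁ _ hb₁sum
  have hi₂_sum : Summable fun j => ‖i₂ j‖ ^ 2 := hind_sum b₂ _ hb₂sum
  -- summability of the vector series
  have hSb₁v : Summable fun j => b₁ j • φ₁ j :=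
    synth_summable φ₁ B₁ hB₁0 hsum1 hup1 b₁ hb₁sum
  have hSav1 : Summable fun j => a j • φ₁ j :=
    synth_summable φ₁ B₁ hB₁0 hsum1 hup1 a ha_sum
  have hSav2 : Summable fun j => a j • φ₂ j :=
    synth_summable φ₂ B₂ hB₂0 hsum2 hup2 a ha_sum
  have hSwv : Summable fun j => w j • φ₂ j :=
    synth_summable φ₂ B₂ hB₂0 hsum2 hup2 w hw_sum
  have hSi₁v : Summable fun j => i₁ j • φ₁ j :=
    synth_summable φ₁ B₁ hB₁0 hsum1 hup1 i₁ hi₁_sum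
  have hSi₂v : Summable fun j => i₂ j • φ₂ j :=
    synth_summable φ₂ B₂ hB₂0 hsum2 hup2 i₂ hi₂_sum
  -- the decomposition S = T - P - W
  have e1 : (∑' j : σ, (⟪f, φ₁ (j : ℕ)⟫ : ℂ) • φ₁ (j : ℕ)) = ∑' j : ℕ, i₁ j • φ₁ j := by
    rw [tsum_subtype σ (fun j => b₁ j • φ₁ j)]
    refine tsum_congr fun j => ?_
    by_cases hj : j ∈ σ
    · rw [hi₁def, Set.indicator_of_mem hj, Set.indicator_of_mem hj]
    · rw [hi₁def, Set.indicator_of_notMem hj, Set.indicator_of_notMem hj, zero_smul]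
  have e2 : (∑' j : ↥σᶜ, (⟪f, φ₂ (j : ℕ)⟫ : ℂ) • φ₂ (j : ℕ)) = ∑' j : ℕ, i₂ j • φ₂ j := by
    rw [tsum_subtype (σᶜ) (fun j => b₂ j • φ₂ j)]
    refine tsum_congr fun j => ?_
    by_cases hj : j ∈ σᶜ
    · rw [hi₂def, Set.indicator_of_mem hj, Set.indicator_of_mem hj]
    · rw [hi₂def, Set.indicator_of_notMem hj, Set.indicator_of_notMem hj, zero_smul]
  have e3 : ∑' j : ℕ, b₁ j • φ₁ j = (∑' j : ℕ, i₁ j • φ₁ j) + ∑' j : ℕ, a j • φ₁ j := by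
    rw [← Summable.tsum_add hSi₁v hSav1]
    refine tsum_congr fun j => ?_
    rw [← add_smul]
    congr 1
    exact (congrFun (Set.indicator_self_add_compl σ b₁) j).symm
  have e4 : ∑' j : ℕ, a j • (φ₁ j - φ₂ j) =
      (∑' j : ℕ, a j • φ₁ j) - ∑' j : ℕ, a j • φ₂ j := by
    rw [← Summable.tsum_sub hSav1 hSav2]
    exact tsum_congr fun j => smul_sub _ _ _
  have e5 : ∑' j : ℕ, i₂ j • φ₂ j = (∑' j : ℕ, a j • φ₂ j) - ∑' j : ℕ, w j • φ₂ j := by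
    rw [← Summable.tsum_sub hSav2 hSwv]
    refine tsum_congr fun j => ?_
    rw [← sub_smul]
    congr 1
    by_cases hj : j ∈ σᶜ
    · rw [hi₂def, hadef, hwdef, Set.indicator_of_mem hj, Set.indicator_of_mem hj,
        Set.indicator_of_mem hj, hb₂def, hb₁def, hddef]
      simp only [inner_sub_right]
      ring
    · rw [hi₂def, hadef, hwdef, Set.indicator_of_notMem hj, Set.indicator_of_notMem hj,
        Set.indicator_of_notMem hj, sub_zero]
  have egoal : (∑' j : σ, (⟪f, φ₁ (j : ℕ)⟫ : ℂ) • φ₁ (j : ℕ)) +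
      (∑' j : ↥σᶜ, (⟪f, φ₂ (j : ℕ)⟫ : ℂ) • φ₂ (j : ℕ)) =
      (∑' j : ℕ, b₁ j • φ₁ j) - (∑' j : ℕ, a j • (φ₁ j - φ₂ j)) - ∑' j : ℕ, w j • φ₂ j := by
    rw [e1, e2, e3, e4, e5]
    abel
  -- lower bound on ‖T‖ from orthogonality
  have hφle : ∀ k : ℕ, ‖φ₁ k‖ ^ 2 ≤ B₁ := by
    intro k
    have hk := Summable.le_tsum (hsum1 (φ₁ k)) k (fun j _ => sq_nonneg _)
    have hx : ‖(⟪φ₁ k, φ₁ k⟫ : ℂ)‖ = ‖φ₁ k‖ ^ 2 := by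
      rw [← inner_self_re_eq_norm, inner_self_eq_norm_sq]
    rw [hx] at hk
    have h := hk.trans (hup1 (φ₁ k))
    have hpos : 0 < ‖φ₁ k‖ ^ 2 := hα.trans (hnorm k)
    nlinarith [h, hpos]
  have hsum_r : Summable fun k => ‖b₁ k‖ ^ 2 * ‖φ₁ k‖ ^ 2 := by
    refine Summable.of_nonneg_of_le (fun k => by positivity)
      (fun k => mul_le_mul_of_nonneg_left (hφle k) (sq_nonneg _)) (hb₁sum.mul_right B₁)
  have hterm_sum : Summable fun k : ℕ => (⟪(∑' j : ℕ, b₁ j • φ₁ j), b₁ k • φ₁ k⟫ : ℂ) :=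
    (HasSum.mapL (innerSL ℂ (∑' j : ℕ, b₁ j • φ₁ j)) hSb₁v.hasSum).summable
  have hTT : (⟪(∑' j : ℕ, b₁ j • φ₁ j), (∑' j : ℕ, b₁ j • φ₁ j)⟫ : ℂ) =
      ∑' k : ℕ, (⟪(∑' j : ℕ, b₁ j • φ₁ j), b₁ k • φ₁ k⟫ : ℂ) :=
    (innerSL ℂ (∑' j : ℕ, b₁ j • φ₁ j)).map_tsum hSb₁v
  have hre : ∀ k : ℕ, ((⟪(∑' j : ℕ, b₁ j • φ₁ j), b₁ k • φ₁ k⟫ : ℂ)).re =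
      ‖b₁ k‖ ^ 2 * ‖φ₁ k‖ ^ 2 := by
    intro k
    have h1 : (⟪φ₁ k, (∑' j : ℕ, b₁ j • φ₁ j)⟫ : ℂ) = b₁ k * ⟪φ₁ k, φ₁ k⟫ := by
      have h0 : (⟪φ₁ k, (∑' j : ℕ, b₁ j • φ₁ j)⟫ : ℂ) =
          ∑' j : ℕ, (⟪φ₁ k, b₁ j • φ₁ j⟫ : ℂ) :=
        (innerSL ℂ (φ₁ k)).map_tsum hSb₁v
      rw [h0, tsum_eq_single k ?_, inner_smul_right]
      intro j hj
      rw [inner_smul_right, horth k j (Ne.symm hj), mul_zero]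
    have h2 : (⟪(∑' j : ℕ, b₁ j • φ₁ j), b₁ k • φ₁ k⟫ : ℂ) =
        ((starRingEnd ℂ) (b₁ k) * b₁ k) * ⟪φ₁ k, φ₁ k⟫ :=
      calc (⟪(∑' j : ℕ, b₁ j • φ₁ j), b₁ k • φ₁ k⟫ : ℂ)
          = b₁ k * ⟪(∑' j : ℕ, b₁ j • φ₁ j), φ₁ k⟫ := inner_smul_right _ _ _
        _ = b₁ k * (starRingEnd ℂ) ⟪φ₁ k, (∑' j : ℕ, b₁ j • φ₁ j)⟫ := by
            rw [inner_conj_symm]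
        _ = b₁ k * ((starRingEnd ℂ) (b₁ k) * ⟪φ₁ k, φ₁ k⟫) := by
            rw [h1, map_mul, inner_conj_symm (φ₁ k) (φ₁ k)]
        _ = ((starRingEnd ℂ) (b₁ k) * b₁ k) * ⟪φ₁ k, φ₁ k⟫ := by ring
    rw [h2, Complex.conj_mul']
    have h3 : ((‖b₁ k‖ : ℂ)) ^ 2 = ((‖b₁ k‖ ^ 2 : ℝ) : ℂ) := by norm_cast
    rw [h3, Complex.re_ofReal_mul]
    congr 1
    rw [← inner_self_eq_norm_sq (𝕜 := ℂ) (φ₁ k)]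
    simp [RCLike.re_to_complex]
  have hTsq : ‖∑' j : ℕ, b₁ j • φ₁ j‖ ^ 2 = ∑' k : ℕ, ‖b₁ k‖ ^ 2 * ‖φ₁ k‖ ^ 2 := by
    have h0 : ‖∑' j : ℕ, b₁ j • φ₁ j‖ ^ 2 =
        ((⟪(∑' j : ℕ, b₁ j • φ₁ j), (∑' j : ℕ, b₁ j • φ₁ j)⟫ : ℂ)).re := by
      rw [← inner_self_eq_norm_sq (𝕜 := ℂ)]
      simp [RCLike.re_to_complex]
    rw [h0, hTT, Complex.re_tsum hterm_sum]
    exact tsum_congr hre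
  have hT2 : α * (A₁ * ‖Kf‖ ^ 2) ≤ ‖∑' j : ℕ, b₁ j • φ₁ j‖ ^ 2 := by
    rw [hTsq]
    calc α * (A₁ * ‖Kf‖ ^ 2) ≤ α * ∑' j : ℕ, ‖b₁ j‖ ^ 2 :=
          mul_le_mul_of_nonneg_left (h₁ f).2.1 hα.le
      _ = ∑' k : ℕ, α * ‖b₁ k‖ ^ 2 := by rw [tsum_mul_left]
      _ ≤ ∑' k : ℕ, ‖b₁ k‖ ^ 2 * ‖φ₁ k‖ ^ 2 := by
          refine Summable.tsum_le_tsum (fun k => ?_) (hb₁sum.mul_left α) hsum_r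
          nlinarith [hnorm k, sq_nonneg ‖b₁ k‖]
  have hT : Real.sqrt (α * A₁) * ‖Kf‖ ≤ ‖∑' j : ℕ, b₁ j • φ₁ j‖ := by
    have h9 : Real.sqrt (α * A₁) * ‖Kf‖ = Real.sqrt (α * (A₁ * ‖Kf‖ ^ 2)) := by
      rw [show α * (A₁ * ‖Kf‖ ^ 2) = (α * A₁) * ‖Kf‖ ^ 2 by ring,
        Real.sqrt_mul (by positivity : (0:ℝ) ≤ α * A₁) (‖Kf‖ ^ 2),
        Real.sqrt_sq (norm_nonneg _)]
    rw [h9]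
    calc Real.sqrt (α * (A₁ * ‖Kf‖ ^ 2)) ≤ Real.sqrt (‖∑' j : ℕ, b₁ j • φ₁ j‖ ^ 2) :=
          Real.sqrt_le_sqrt hT2
      _ = ‖∑' j : ℕ, b₁ j • φ₁ j‖ := Real.sqrt_sq (norm_nonneg _)
  -- upper bounds on the perturbation terms
  have ha_tsum : ∑' j : ℕ, ‖a j‖ ^ 2 ≤ B₁ * ‖f‖ ^ 2 :=
    (Summable.tsum_le_tsum (fun j => hind_le b₁ _ j) ha_sum hb₁sum).trans (hup1 f)
  have hP : ‖∑' j : ℕ, a j • (φ₁ j - φ₂ j)‖ ≤ Cμ * (Real.sqrt B₁ * ‖f‖) := by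
    refine (happ a ha_sum).trans (mul_le_mul_of_nonneg_left ?_ hC0)
    calc Real.sqrt (∑' j : ℕ, ‖a j‖ ^ 2) ≤ Real.sqrt (B₁ * ‖f‖ ^ 2) :=
          Real.sqrt_le_sqrt ha_tsum
      _ = Real.sqrt B₁ * ‖f‖ := by rw [Real.sqrt_mul hB₁0, Real.sqrt_sq (norm_nonneg _)]
  have hw_tsum : ∑' j : ℕ, ‖w j‖ ^ 2 ≤ (Cμ * ‖f‖) ^ 2 :=
    (Summable.tsum_le_tsum (fun j => hind_le d _ j) hw_sum hd_sum).trans hd_tsum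
  have hW : ‖∑' j : ℕ, w j • φ₂ j‖ ≤ Real.sqrt B₂ * (Cμ * ‖f‖) := by
    refine (synth_tsum_le φ₂ B₂ hB₂0 hsum2 hup2 w hw_sum).trans
      (mul_le_mul_of_nonneg_left ?_ (Real.sqrt_nonneg _))
    calc Real.sqrt (∑' j : ℕ, ‖w j‖ ^ 2) ≤ Real.sqrt ((Cμ * ‖f‖) ^ 2) :=
          Real.sqrt_le_sqrt hw_tsum
      _ = Cμ * ‖f‖ := Real.sqrt_sq (by positivity)
  -- putting everything together
  have h6a : ‖∑' j : ℕ, b₁ j • φ₁ j‖ - ‖∑' j : ℕ, a j • (φ₁ j - φ₂ j)‖ ≤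
      ‖(∑' j : ℕ, b₁ j • φ₁ j) - ∑' j : ℕ, a j • (φ₁ j - φ₂ j)‖ := norm_sub_norm_le _ _
  have h6b : ‖(∑' j : ℕ, b₁ j • φ₁ j) - ∑' j : ℕ, a j • (φ₁ j - φ₂ j)‖ -
      ‖∑' j : ℕ, w j • φ₂ j‖ ≤
      ‖(∑' j : ℕ, b₁ j • φ₁ j) - (∑' j : ℕ, a j • (φ₁ j - φ₂ j)) -
        ∑' j : ℕ, w j • φ₂ j‖ := norm_sub_norm_le _ _
  have hfK : ‖f‖ ≤ c * ‖Kf‖ := hc f hf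
  have h7 := mul_le_mul_of_nonneg_left hfK
    (mul_nonneg (add_nonneg (Real.sqrt_nonneg B₁) (Real.sqrt_nonneg B₂)) hC0)
  calc (Real.sqrt (α * A₁) - (Real.sqrt B₁ + Real.sqrt B₂) * Cμ * c) * ‖Kf‖
      ≤ ‖(∑' j : ℕ, b₁ j • φ₁ j) - (∑' j : ℕ, a j • (φ₁ j - φ₂ j)) -
          ∑' j : ℕ, w j • φ₂ j‖ := by nlinarith [hT, hP, hW, h6a, h6b, h7]
    _ = ‖(∑' j : σ, (⟪f, φ₁ (j : ℕ)⟫ : ℂ) • φ₁ (j : ℕ)) +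
          ∑' j : ↥σᶜ, (⟪f, φ₂ (j : ℕ)⟫ : ℂ) • φ₂ (j : ℕ)‖ := by rw [egoal]
end
end
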